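/- arXiv:0705.4662 — 8 statements merged into one kernel-verified Lean document; each statement's English description precedes it below -/
import Mathlib

section
/- There exist universal constants c, C > 0 such that for every n ≥ 1 and every element (x, j) of the lamplighter group G: c·(d_{Cₙ}(0, j) + M(x)) ≤ ρ((x, j), (∅, 0)) ≤ C·(d_{Cₙ}(0, j) + M(x)), where M(x) = max_{k ∈ x} (d_{Cₙ}(0, k) + 1) if x ≠ ∅ and M(∅) = 0. -/
open Finset

/-- The lamplighter group `C₂ ≀ Cₙ`: pairs `(x, j)` of a finite subset `x` of `ZMod n`
(the set of lit lamps) and a position `j ∈ ZMod n`. -/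
abbrev LL (n : ℕ) : Type := Finset (ZMod n) × ZMod n

namespace LL

/-- Multiplication `(x, g)·(y, k) = (x △ (y − g), g + k)` where
`y − g = {h : g + h ∈ y}`. -/
def gmul {n : ℕ} (a b : LL n) : LL n :=
  (symmDiff a.1 (b.1.image (fun h => h - a.2)), a.2 + b.2)

def gone (n : ℕ) : LL n := (∅, 0)

def ginv {n : ℕ} (a : LL n) : LL n := (a.1.image (fun h => h + a.2), -a.2)

instance instGroup (n : ℕ) : Group (LL n) where
  mul := gmul
  one := gone n
  inv := ginv
  mul_assoc a b c := by
    show gmul (gmul a b) c = gmul a (gmul b c)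
    unfold gmul
    refine Prod.ext ?_ (add_assoc _ _ _)
    simp only
    rw [Finset.image_symmDiff _ _ (sub_left_injective), Finset.image_image,
      symmDiff_assoc]
    congr 2
    ext t
    simp [sub_sub, add_comm]
  one_mul a := by
    show gmul (gone n) a = a
    unfold gmul gone
    refine Prod.ext ?_ (zero_add _)
    simp only [← Finset.bot_eq_empty, bot_symmDiff]
    simp
  mul_one a := by
    show gmul a (gone n) = a
    unfold gmul gone
    refine Prod.ext ?_ (add_zero _)
    show symmDiff a.1 (Finset.image _ ∅) = a.1
    rw [Finset.image_empty]
    exact symmDiff_bot a.1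
  inv_mul_cancel a := by
    show gmul (ginv a) a = gone n
    unfold gmul ginv gone
    refine Prod.ext ?_ (neg_add_cancel _)
    simp only
    have h : (fun h => h - -a.2) = (fun h : ZMod n => h + a.2) := by
      funext t; rw [sub_neg_eq_add]
    rw [h, symmDiff_self, Finset.bot_eq_empty]

end LL

/-- The word "distance" associated to a set `T ⊆ G`: the least `L` such
that `a⁻¹ * b` is a product of `L` elements of `T`. -/
noncomputable def wordDist {G : Type*} [Group G] (T : Set G) (a b : G) : ℕ :=
  sInf {L : ℕ | ∃ l : List G, l.length = L ∧ (∀ g ∈ l, g ∈ T) ∧ l.prod = a⁻¹ * b}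

/-- The two standard generators `s₁ = ({0}, 0)` and `s₂ = (∅, 1)` of the
lamplighter group. -/
def lampGens (n : ℕ) : Set (LL n) :=
  {(({0} : Finset (ZMod n)), (0 : ZMod n)), ((∅ : Finset (ZMod n)), (1 : ZMod n))}

/-- The word metric `ρ` on the lamplighter group with respect to
`{s₁, s₂, s₁⁻¹, s₂⁻¹}`. -/
noncomputable def lampRho (n : ℕ) (a b : LL n) : ℕ :=
  wordDist (lampGens n ∪ (lampGens n)⁻¹) a b


/-- The cycle metric on `ZMod n`: the least `|a|` over integers `a` with
`a ≡ j - k (mod n)`. -/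
noncomputable def cycDist (n : ℕ) (j k : ZMod n) : ℕ :=
  sInf {m : ℕ | ∃ a : ℤ, a.natAbs = m ∧ (a : ZMod n) = j - k}

/-- `M(x) = max_{k ∈ x} (d_{Cₙ}(0,k) + 1)`, with `M(∅) = 0`. -/
noncomputable def lampM (n : ℕ) (x : Finset (ZMod n)) : ℕ :=
  x.sup (fun k => cycDist n 0 k + 1)

section Aux

variable {n : ℕ}

lemma LL_mul_def (a b : LL n) : a * b = LL.gmul a b := rfl

lemma LL_one_def : (1 : LL n) = ((∅ : Finset (ZMod n)), (0 : ZMod n)) := rfl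

lemma LL_inv_def (a : LL n) : a⁻¹ = LL.ginv a := rfl

/-- The symmetric generating set. -/
def llgens (n : ℕ) : Set (LL n) := lampGens n ∪ (lampGens n)⁻¹

lemma s1_inv : ((({0} : Finset (ZMod n)), (0 : ZMod n)) : LL n)⁻¹
    = ((({0} : Finset (ZMod n)), (0 : ZMod n)) : LL n) := by
  rw [LL_inv_def]; unfold LL.ginv; simp

lemma s2_inv : (((∅ : Finset (ZMod n)), (1 : ZMod n)) : LL n)⁻¹
    = (((∅ : Finset (ZMod n)), (-1 : ZMod n)) : LL n) := by
  rw [LL_inv_def]; unfold LL.ginv; simp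

lemma s2'_inv : (((∅ : Finset (ZMod n)), (-1 : ZMod n)) : LL n)⁻¹
    = (((∅ : Finset (ZMod n)), (1 : ZMod n)) : LL n) := by
  rw [LL_inv_def]; unfold LL.ginv; simp

lemma llgens_iff {g : LL n} :
    g ∈ llgens n ↔ g = ((({0} : Finset (ZMod n)), (0 : ZMod n)) : LL n)
      ∨ g = (((∅ : Finset (ZMod n)), (1 : ZMod n)) : LL n)
      ∨ g = (((∅ : Finset (ZMod n)), (-1 : ZMod n)) : LL n) := by
  constructor
  · rintro (h | h)
    · rcases h with h | h
      · exact Or.inl h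
      · exact Or.inr (Or.inl h)
    · rw [Set.mem_inv] at h
      rcases h with h | h
      · left; rw [← inv_inv g, h, s1_inv]
      · right; right; rw [← inv_inv g, h, s2_inv]
  · rintro (rfl | rfl | rfl)
    · exact Or.inl (Or.inl rfl)
    · exact Or.inl (Or.inr rfl)
    · refine Or.inr ?_
      rw [Set.mem_inv, s2'_inv]
      exact Or.inr rfl

/-! ### cycDist lemmas -/

lemma cycDist_le {j k : ZMod n} {a : ℤ} (h : (a : ZMod n) = j - k) :
    cycDist n j k ≤ a.natAbs :=
  Nat.sInf_le ⟨a, rfl, h⟩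

lemma cycDist_spec [NeZero n] (j k : ZMod n) :
    ∃ a : ℤ, a.natAbs = cycDist n j k ∧ (a : ZMod n) = j - k := by
  have hne : {m : ℕ | ∃ a : ℤ, a.natAbs = m ∧ (a : ZMod n) = j - k}.Nonempty :=
    ⟨(((j - k).val : ℤ)).natAbs, ((j - k).val : ℤ), rfl, by
      push_cast
      exact (ZMod.natCast_val _).trans (ZMod.cast_id _ _)⟩
  exact Nat.sInf_mem hne

lemma cycDist_zero_zero : cycDist n 0 0 = 0 :=
  Nat.le_zero.mp (by simpa using cycDist_le (j := (0 : ZMod n)) (k := 0) (a := 0) (by simp))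

lemma cycDist_neg_le [NeZero n] (u : ZMod n) : cycDist n 0 (-u) ≤ cycDist n 0 u := by
  obtain ⟨a, ha, h2⟩ := cycDist_spec (n := n) 0 u
  calc cycDist n 0 (-u) ≤ (-a).natAbs := cycDist_le (by push_cast; rw [h2]; ring)
    _ = cycDist n 0 u := by rw [Int.natAbs_neg, ha]

lemma cycDist_neg [NeZero n] (u : ZMod n) : cycDist n 0 (-u) = cycDist n 0 u :=
  le_antisymm (cycDist_neg_le u) (by simpa using cycDist_neg_le (-u))

lemma cycDist_add_le [NeZero n] (u v : ZMod n) :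
    cycDist n 0 (u + v) ≤ cycDist n 0 u + cycDist n 0 v := by
  obtain ⟨a, ha, h2⟩ := cycDist_spec (n := n) 0 u
  obtain ⟨b, hb, h3⟩ := cycDist_spec (n := n) 0 v
  calc cycDist n 0 (u + v) ≤ (a + b).natAbs := cycDist_le (by push_cast; rw [h2, h3]; ring)
    _ ≤ a.natAbs + b.natAbs := Int.natAbs_add_le a b
    _ = _ := by rw [ha, hb]

/-! ### Reachability by words in the generators -/

def Reach (n : ℕ) (g : LL n) (L : ℕ) : Prop :=
  ∃ l : List (LL n), l.length ≤ L ∧ (∀ g' ∈ l, g' ∈ llgens n) ∧ l.prod = g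

lemma reach_one : Reach n 1 0 := ⟨[], by simp⟩

lemma reach_gen {g : LL n} (h : g ∈ llgens n) : Reach n g 1 := ⟨[g], by simp [h]⟩

lemma reach_mono {g : LL n} {L K : ℕ} (h : Reach n g L) (hk : L ≤ K) : Reach n g K := by
  obtain ⟨l, h1, h2, h3⟩ := h
  exact ⟨l, le_trans h1 hk, h2, h3⟩

lemma reach_mul {g h : LL n} {L K : ℕ} (hg : Reach n g L) (hh : Reach n h K) :
    Reach n (g * h) (L + K) := by
  obtain ⟨l1, h1, h2, h3⟩ := hg
  obtain ⟨l2, k1, k2, k3⟩ := hh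
  refine ⟨l1 ++ l2, by simp only [List.length_append]; omega, ?_, by
    rw [List.prod_append, h3, k3]⟩
  intro g' hg'
  rcases List.mem_append.mp hg' with h | h
  exacts [h2 _ h, k2 _ h]

lemma llgens_inv {g : LL n} (h : g ∈ llgens n) : g⁻¹ ∈ llgens n := by
  rcases llgens_iff.mp h with rfl | rfl | rfl
  · rw [s1_inv]; exact llgens_iff.mpr (Or.inl rfl)
  · rw [s2_inv]; exact llgens_iff.mpr (Or.inr (Or.inr rfl))
  · rw [s2'_inv]; exact llgens_iff.mpr (Or.inr (Or.inl rfl))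

lemma reach_inv {g : LL n} {L : ℕ} (h : Reach n g L) : Reach n g⁻¹ L := by
  obtain ⟨l, h1, h2, h3⟩ := h
  refine ⟨(l.map fun x => x⁻¹).reverse, by simpa using h1, ?_, by
    rw [← List.prod_inv_reverse, h3]⟩
  intro g' hg'
  simp only [List.mem_reverse, List.mem_map] at hg'
  obtain ⟨a, ha, rfl⟩ := hg'
  exact llgens_inv (h2 a ha)

/-! ### Multiplication computations -/

lemma mul_move (S : Finset (ZMod n)) (c e : ZMod n) :
    ((S, c) : LL n) * ((∅ : Finset (ZMod n)), e) = (S, c + e) := by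
  rw [LL_mul_def]; unfold LL.gmul; simp

lemma symmDiff_singleton {e : ZMod n} {S : Finset (ZMod n)} (h : e ∉ S) :
    symmDiff S {e} = insert e S := by
  ext a
  by_cases hae : a = e <;>
    simp [Finset.mem_symmDiff, Finset.mem_insert, hae, h]

lemma mul_toggle (S : Finset (ZMod n)) (c : ZMod n) :
    ((S, c) : LL n) * (((({0} : Finset (ZMod n)), (0 : ZMod n))) : LL n)
      = (symmDiff S {-c}, c) := by
  rw [LL_mul_def]; unfold LL.gmul; simp [zero_sub]

lemma reach_walk (b : ℕ) :
    Reach n ((∅ : Finset (ZMod n)), ((b : ℕ) : ZMod n)) b ∧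
    Reach n ((∅ : Finset (ZMod n)), -((b : ℕ) : ZMod n)) b := by
  induction b with
  | zero =>
    constructor
    · simp only [Nat.cast_zero]
      rw [← LL_one_def]; exact reach_one
    · simp only [Nat.cast_zero, neg_zero]
      rw [← LL_one_def]; exact reach_one
  | succ b ih =>
    have h1 := reach_mul ih.1 (reach_gen (llgens_iff.mpr (Or.inr (Or.inl rfl))))
    rw [mul_move] at h1
    have h2 := reach_mul ih.2 (reach_gen (llgens_iff.mpr (Or.inr (Or.inr rfl))))
    rw [mul_move] at h2
    constructor
    · rw [show (((b + 1 : ℕ)) : ZMod n) = ((b : ℕ) : ZMod n) + 1 by push_cast; ring]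
      exact h1
    · rw [show -(((b + 1 : ℕ)) : ZMod n) = -((b : ℕ) : ZMod n) + -1 by push_cast; ring]
      exact h2

lemma reach_int {u : ZMod n} {a : ℤ} (h : (a : ZMod n) = u) :
    Reach n ((∅ : Finset (ZMod n)), u) a.natAbs := by
  have hcast : ((a.natAbs : ℕ) : ZMod n) = (((a.natAbs : ℤ)) : ZMod n) := by
    exact (Int.cast_natCast _).symm
  rcases le_or_gt 0 a with hc | hc
  · have h4 : ((a.natAbs : ℤ)) = a := by omega
    have h3 : ((a.natAbs : ℕ) : ZMod n) = u := by rw [← h, hcast, h4]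
    rw [← h3]; exact (reach_walk a.natAbs).1
  · have h4 : ((a.natAbs : ℤ)) = -a := by omega
    have h3 : -((a.natAbs : ℕ) : ZMod n) = u := by
      rw [← h, hcast, h4]; push_cast; ring
    rw [← h3]; exact (reach_walk a.natAbs).2


/-! ### Sweep lemmas -/

lemma reach_sweep_pos (B : ℕ) (S : Finset (ZMod n))
    (hS : ∀ k ∈ S, ∃ i : ℕ, i ≤ B ∧ k = -((i : ℕ) : ZMod n)) :
    Reach n ((S, ((B : ℕ) : ZMod n)) : LL n) (B + S.card) := by
  induction B generalizing S with
  | zero =>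
    have hsub : S ⊆ {0} := by
      intro k hk
      obtain ⟨i, hi, rfl⟩ := hS k hk
      have : i = 0 := Nat.le_zero.mp hi
      subst this
      simp
    rcases Finset.subset_singleton_iff.mp hsub with rfl | rfl
    · simp only [Nat.cast_zero, Finset.card_empty]
      rw [← LL_one_def]; exact reach_one
    · have h := reach_gen (n := n) (llgens_iff.mpr (Or.inl rfl))
      simpa using h
  | succ B ih =>
    set e : ZMod n := -(((B + 1 : ℕ)) : ZMod n) with he
    set S' := S.erase e with hS'def
    have hS'cond : ∀ k ∈ S', ∃ i : ℕ, i ≤ B ∧ k = -((i : ℕ) : ZMod n) := by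
      intro k hk
      obtain ⟨i, hi, hke⟩ := hS k (Finset.mem_of_mem_erase hk)
      have hne := Finset.ne_of_mem_erase hk
      rcases Nat.lt_or_ge i (B + 1) with h | h
      · exact ⟨i, by omega, hke⟩
      · exfalso
        apply hne
        rw [hke, he]
        congr 2
        omega
    have hmain := ih S' hS'cond
    have hcastsucc : (((B + 1 : ℕ)) : ZMod n) = ((B : ℕ) : ZMod n) + 1 := by
      push_cast; ring
    by_cases hem : e ∈ S
    · have h1 := reach_mul hmain (reach_gen (llgens_iff.mpr (Or.inr (Or.inl rfl))))
      rw [mul_move] at h1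
      have h2 := reach_mul h1 (reach_gen (llgens_iff.mpr (Or.inl rfl)))
      rw [mul_toggle] at h2
      have heq : symmDiff S' {-(((B : ℕ) : ZMod n) + 1)} = S := by
        have hnot : e ∉ S' := Finset.notMem_erase e S
        have h3 : -(((B : ℕ) : ZMod n) + 1) = e := by rw [he, hcastsucc]
        rw [h3, symmDiff_singleton hnot, hS'def, Finset.insert_erase hem]
      rw [heq] at h2
      have hcard : S'.card + 1 = S.card := by
        rw [hS'def]
        exact Finset.card_erase_add_one hem
      rw [hcastsucc]
      exact reach_mono h2 (by omega)
    · have h1 := reach_mul hmain (reach_gen (llgens_iff.mpr (Or.inr (Or.inl rfl))))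
      rw [mul_move] at h1
      have hSS : S' = S := Finset.erase_eq_of_notMem hem
      rw [hSS] at h1
      rw [hcastsucc]
      exact reach_mono h1 (by omega)

lemma reach_sweep_neg (B : ℕ) (S : Finset (ZMod n))
    (hS : ∀ k ∈ S, ∃ i : ℕ, i ≤ B ∧ k = ((i : ℕ) : ZMod n)) :
    Reach n ((S, -((B : ℕ) : ZMod n)) : LL n) (B + S.card) := by
  induction B generalizing S with
  | zero =>
    have hsub : S ⊆ {0} := by
      intro k hk
      obtain ⟨i, hi, rfl⟩ := hS k hk
      have : i = 0 := Nat.le_zero.mp hi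
      subst this
      simp
    rcases Finset.subset_singleton_iff.mp hsub with rfl | rfl
    · simp only [Nat.cast_zero, neg_zero, Finset.card_empty]
      rw [← LL_one_def]; exact reach_one
    · have h := reach_gen (n := n) (llgens_iff.mpr (Or.inl rfl))
      simp only [Nat.cast_zero, neg_zero, Finset.card_singleton]
      exact reach_mono h (by omega)
  | succ B ih =>
    set e : ZMod n := (((B + 1 : ℕ)) : ZMod n) with he
    set S' := S.erase e with hS'def
    have hS'cond : ∀ k ∈ S', ∃ i : ℕ, i ≤ B ∧ k = ((i : ℕ) : ZMod n) := by
      intro k hk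
      obtain ⟨i, hi, hke⟩ := hS k (Finset.mem_of_mem_erase hk)
      have hne := Finset.ne_of_mem_erase hk
      rcases Nat.lt_or_ge i (B + 1) with h | h
      · exact ⟨i, by omega, hke⟩
      · exfalso
        apply hne
        rw [hke, he]
        congr 1
        omega
    have hmain := ih S' hS'cond
    have hcastsucc : -(((B + 1 : ℕ)) : ZMod n) = -((B : ℕ) : ZMod n) + -1 := by
      push_cast; ring
    by_cases hem : e ∈ S
    · have h1 := reach_mul hmain (reach_gen (llgens_iff.mpr (Or.inr (Or.inr rfl))))
      rw [mul_move] at h1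
      have h2 := reach_mul h1 (reach_gen (llgens_iff.mpr (Or.inl rfl)))
      rw [mul_toggle] at h2
      have heq : symmDiff S' {-(-((B : ℕ) : ZMod n) + -1)} = S := by
        have hnot : e ∉ S' := Finset.notMem_erase e S
        have h3 : -(-((B : ℕ) : ZMod n) + -1) = e := by rw [he]; push_cast; ring
        rw [h3, symmDiff_singleton hnot, hS'def, Finset.insert_erase hem]
      rw [heq] at h2
      have hcard : S'.card + 1 = S.card := by
        rw [hS'def]
        exact Finset.card_erase_add_one hem
      rw [hcastsucc]
      exact reach_mono h2 (by omega)
    · have h1 := reach_mul hmain (reach_gen (llgens_iff.mpr (Or.inr (Or.inr rfl))))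
      rw [mul_move] at h1
      have hSS : S' = S := Finset.erase_eq_of_notMem hem
      rw [hSS] at h1
      rw [hcastsucc]
      exact reach_mono h1 (by omega)

/-! ### Lower bound invariant -/

lemma lower_invariant [NeZero n] (l : List (LL n)) (hl : ∀ g ∈ l, g ∈ llgens n) :
    cycDist n 0 (l.prod).2 ≤ l.length ∧
      ∀ k ∈ (l.prod).1, cycDist n 0 k + 1 ≤ l.length := by
  induction l with
  | nil =>
    simp only [List.prod_nil, List.length_nil]
    constructor
    · show cycDist n 0 ((1 : LL n)).2 ≤ 0
      rw [LL_one_def]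
      simp [cycDist_zero_zero]
    · intro k hk
      rw [LL_one_def] at hk
      simp at hk
  | cons a l ih =>
    have ha := hl a List.mem_cons_self
    have ih' := ih (fun g hg => hl g (List.mem_cons_of_mem a hg))
    rw [List.prod_cons, List.length_cons, LL_mul_def]
    unfold LL.gmul
    have ha2 : cycDist n 0 a.2 ≤ 1 ∧ a.1 ⊆ {0} := by
      rcases llgens_iff.mp ha with rfl | rfl | rfl
      · simp [cycDist_zero_zero]
      · refine ⟨?_, by simp⟩
        have := cycDist_le (j := (0 : ZMod n)) (k := (1 : ZMod n)) (a := -1)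
          (by push_cast; ring)
        simpa using this
      · refine ⟨?_, by simp⟩
        have := cycDist_le (j := (0 : ZMod n)) (k := (-1 : ZMod n)) (a := 1)
          (by push_cast; ring)
        simpa using this
    constructor
    · calc cycDist n 0 (a.2 + (l.prod).2)
          ≤ cycDist n 0 a.2 + cycDist n 0 (l.prod).2 := cycDist_add_le _ _
        _ ≤ 1 + l.length := add_le_add ha2.1 ih'.1
        _ = l.length + 1 := by omega
    · intro k hk
      rw [Finset.mem_symmDiff] at hk
      rcases hk with ⟨hk1, _⟩ | ⟨hk1, _⟩
      · have hk0 : k = 0 := by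
          have := ha2.2 hk1
          simpa using this
        subst hk0
        rw [cycDist_zero_zero]
        omega
      · simp only [Finset.mem_image] at hk1
        obtain ⟨h, hh, rfl⟩ := hk1
        have hd := ih'.2 h hh
        have hle : cycDist n 0 (h - a.2) ≤ cycDist n 0 h + 1 := by
          rw [sub_eq_add_neg]
          calc cycDist n 0 (h + -a.2)
              ≤ cycDist n 0 h + cycDist n 0 (-a.2) := cycDist_add_le _ _
            _ = cycDist n 0 h + cycDist n 0 a.2 := by rw [cycDist_neg]
            _ ≤ cycDist n 0 h + 1 := by omega
        omega
/-! ### Upper bound construction -/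

lemma reach_target [NeZero n] (j : ZMod n) :
    Reach n ((∅ : Finset (ZMod n)), j) (cycDist n 0 j) := by
  obtain ⟨a, ha, h2⟩ := cycDist_spec (n := n) 0 j
  have h3 : ((-a : ℤ) : ZMod n) = j := by push_cast; rw [h2]; ring
  have h4 := reach_int h3
  rwa [Int.natAbs_neg, ha] at h4

lemma upper_reach [NeZero n] (x : Finset (ZMod n)) (j : ZMod n) :
    Reach n ((x, j) : LL n) (cycDist n 0 j + 6 * lampM n x) := by
  classical
  have h5 := reach_target (n := n) j
  by_cases hx : x = ∅
  · subst hx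
    have hM0 : lampM n (∅ : Finset (ZMod n)) = 0 := by simp [lampM]
    rw [hM0]
    exact reach_mono h5 (by omega)
  · obtain ⟨k0, hk0⟩ := Finset.nonempty_of_ne_empty hx
    have hxr : ∀ k ∈ x, cycDist n 0 k + 1 ≤ lampM n x := fun k hk =>
      Finset.le_sup (f := fun k => cycDist n 0 k + 1) hk
    have hM1 : 1 ≤ lampM n x := by have := hxr k0 hk0; omega
    set r := lampM n x - 1 with hrdef
    set P := x.filter (fun k => ∃ i : ℕ, i ≤ r ∧ k = -((i : ℕ) : ZMod n)) with hPdef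
    have hPcond : ∀ k ∈ P, ∃ i : ℕ, i ≤ r ∧ k = -((i : ℕ) : ZMod n) := fun k hk =>
      (Finset.mem_filter.mp hk).2
    have hPsub : P ⊆ x := Finset.filter_subset _ _
    have hNcond : ∀ k ∈ x \ P, ∃ i : ℕ, i ≤ r ∧ k = ((i : ℕ) : ZMod n) := by
      intro k hk
      rw [Finset.mem_sdiff] at hk
      obtain ⟨hkx, hkP⟩ := hk
      obtain ⟨a, ha, h2⟩ := cycDist_spec (n := n) 0 k
      have har : a.natAbs ≤ r := by have := hxr k hkx; omega
      rcases le_or_gt 0 a with hpos | hneg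
      · exfalso
        apply hkP
        rw [hPdef, Finset.mem_filter]
        refine ⟨hkx, a.natAbs, har, ?_⟩
        have h4 : ((a.natAbs : ℤ)) = a := by omega
        have hcst : ((a.natAbs : ℕ) : ZMod n) = (a : ZMod n) :=
          (Int.cast_natCast a.natAbs).symm.trans (congrArg (fun z : ℤ => (z : ZMod n)) h4)
        rw [hcst, h2]; ring
      · refine ⟨a.natAbs, har, ?_⟩
        have h4 : ((a.natAbs : ℤ)) = -a := by omega
        have hcst : ((a.natAbs : ℕ) : ZMod n) = ((-a : ℤ) : ZMod n) :=
          (Int.cast_natCast a.natAbs).symm.trans (congrArg (fun z : ℤ => (z : ZMod n)) h4)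
        rw [hcst]; push_cast; rw [h2]; ring
    have hA := reach_sweep_pos r P hPcond
    have hB := (reach_walk (n := n) r).2
    have hC := reach_sweep_neg r (x \ P) hNcond
    have hD := (reach_walk (n := n) r).1
    have hbig := reach_mul (reach_mul (reach_mul (reach_mul hA hB) hC) hD) h5
    have e1 : ((P, ((r : ℕ) : ZMod n)) : LL n) * ((∅ : Finset (ZMod n)), -((r : ℕ) : ZMod n))
        = (P, 0) := by rw [mul_move, add_neg_cancel]
    have hPN : symmDiff P (x \ P) = x := by
      ext a
      have hax : a ∈ P → a ∈ x := fun h => hPsub h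
      simp only [Finset.mem_symmDiff, Finset.mem_sdiff]
      tauto
    have e2 : ((P, (0 : ZMod n)) : LL n) * ((x \ P, -((r : ℕ) : ZMod n)) : LL n)
        = (x, -((r : ℕ) : ZMod n)) := by
      rw [LL_mul_def]; unfold LL.gmul
      refine Prod.ext ?_ (zero_add _)
      show symmDiff P ((x \ P).image (fun h => h - (0 : ZMod n))) = x
      have himg : (x \ P).image (fun h : ZMod n => h - 0) = x \ P := by simp
      rw [himg]; exact hPN
    have e3 : ((x, -((r : ℕ) : ZMod n)) : LL n) * ((∅ : Finset (ZMod n)), ((r : ℕ) : ZMod n))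
        = (x, 0) := by rw [mul_move, neg_add_cancel]
    have e4 : ((x, (0 : ZMod n)) : LL n) * ((∅ : Finset (ZMod n)), j) = (x, j) := by
      rw [mul_move, zero_add]
    rw [e1, e2, e3, e4] at hbig
    have hcards : (x \ P).card + P.card = x.card := Finset.card_sdiff_add_card_eq_card hPsub
    have hwit : ∀ k : ZMod n, ∃ a : ℤ, k ∈ x → (a.natAbs ≤ r ∧ (a : ZMod n) = 0 - k) := by
      intro k
      by_cases hk : k ∈ x
      · obtain ⟨a, ha, h2⟩ := cycDist_spec (n := n) 0 k
        exact ⟨a, fun _ => ⟨by have := hxr k hk; omega, h2⟩⟩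
      · exact ⟨0, fun h => absurd h hk⟩
    choose f hf using hwit
    have hx2 : x.card ≤ (Finset.Icc (-(r : ℤ)) (r : ℤ)).card := by
      apply Finset.card_le_card_of_injOn f
      · intro k hk
        have := (hf k hk).1
        rw [Finset.mem_coe, Finset.mem_Icc]
        omega
      · intro k hk k' hk' hee
        have h1 := (hf k (Finset.mem_coe.mp hk)).2
        have h2 := (hf k' (Finset.mem_coe.mp hk')).2
        rw [hee] at h1
        have h3 : (0 : ZMod n) - k = 0 - k' := h1.symm.trans h2
        have h4 : -k = -k' := by simpa [zero_sub] using h3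
        exact neg_injective h4
    have hIcc : (Finset.Icc (-(r : ℤ)) (r : ℤ)).card = 2 * r + 1 := by
      rw [Int.card_Icc]; omega
    rw [hIcc] at hx2
    exact reach_mono hbig (by omega)

end Aux

/-- Universal two-sided comparison of the lamplighter word metric with
`d_{Cₙ}(0, j) + M(x)`. -/
theorem lamplighter_word_metric_approx :
    ∃ c C : ℝ, 0 < c ∧ 0 < C ∧
      ∀ n : ℕ, 1 ≤ n → ∀ (x : Finset (ZMod n)) (j : ZMod n),
        c * ((cycDist n 0 j : ℝ) + (lampM n x : ℝ)) ≤
            (lampRho n (x, j) ((∅ : Finset (ZMod n)), (0 : ZMod n)) : ℝ) ∧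
          (lampRho n (x, j) ((∅ : Finset (ZMod n)), (0 : ZMod n)) : ℝ) ≤
            C * ((cycDist n 0 j : ℝ) + (lampM n x : ℝ)) := by
  refine ⟨1/2, 6, by norm_num, by norm_num, ?_⟩
  intro n hn x j
  haveI : NeZero n := ⟨by omega⟩
  have hone : (((∅ : Finset (ZMod n)), (0 : ZMod n)) : LL n) = 1 := LL_one_def.symm
  have hrho : lampRho n (x, j) ((∅ : Finset (ZMod n)), (0 : ZMod n)) =
      sInf {L : ℕ | ∃ l : List (LL n), l.length = L ∧ (∀ g ∈ l, g ∈ llgens n) ∧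
        l.prod = ((x, j) : LL n)⁻¹} := by
    unfold lampRho wordDist llgens
    simp only [hone, mul_one]
  have hup := upper_reach (n := n) x j
  obtain ⟨l, hl1, hl2, hl3⟩ := reach_inv hup
  have hrho_le : lampRho n (x, j) ((∅ : Finset (ZMod n)), (0 : ZMod n)) ≤
      cycDist n 0 j + 6 * lampM n x := by
    rw [hrho]
    exact le_trans (Nat.sInf_le ⟨l, rfl, hl2, hl3⟩) hl1
  have hmem : lampRho n (x, j) ((∅ : Finset (ZMod n)), (0 : ZMod n)) ∈
      {L : ℕ | ∃ l : List (LL n), l.length = L ∧ (∀ g ∈ l, g ∈ llgens n) ∧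
        l.prod = ((x, j) : LL n)⁻¹} := by
    rw [hrho]
    exact Nat.sInf_mem ⟨l.length, l, rfl, hl2, hl3⟩
  obtain ⟨l0, hl01, hl02, hl03⟩ := hmem
  have hreach0 : Reach n (((x, j) : LL n)⁻¹)
      (lampRho n (x, j) ((∅ : Finset (ZMod n)), (0 : ZMod n))) :=
    ⟨l0, le_of_eq hl01, hl02, hl03⟩
  obtain ⟨l1, hm1, hm2, hm3⟩ := reach_inv hreach0
  rw [inv_inv] at hm3
  have hinv := lower_invariant l1 hm2
  rw [hm3] at hinv
  have hd : cycDist n 0 j ≤ lampRho n (x, j) ((∅ : Finset (ZMod n)), (0 : ZMod n)) :=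
    le_trans hinv.1 hm1
  have hMle : lampM n x ≤ lampRho n (x, j) ((∅ : Finset (ZMod n)), (0 : ZMod n)) := by
    apply Finset.sup_le
    intro k hk
    exact le_trans (hinv.2 k hk) hm1
  constructor
  · have h1 : (cycDist n 0 j + lampM n x : ℕ) ≤
        2 * lampRho n (x, j) ((∅ : Finset (ZMod n)), (0 : ZMod n)) := by omega
    have h2 : ((cycDist n 0 j : ℝ) + (lampM n x : ℝ)) ≤
        2 * (lampRho n (x, j) ((∅ : Finset (ZMod n)), (0 : ZMod n)) : ℝ) := by
      exact_mod_cast h1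
    linarith
  · have h2 : (lampRho n (x, j) ((∅ : Finset (ZMod n)), (0 : ZMod n)) : ℝ) ≤
        (cycDist n 0 j : ℝ) + 6 * (lampM n x : ℝ) := by exact_mod_cast hrho_le
    linarith
end

section
/- For every n ≥ 1 and every element (x, j) of the lamplighter group G, the word metric satisfies both ρ((x, j), (∅, 0)) ≥ d_{Cₙ}(0, j) and, for every k ∈ x, ρ((x, j), (∅, 0)) ≥ d_{Cₙ}(0, k) + 1. -/
open Finset

section Aux
variable {n : ℕ}

lemma LLaux.mul_snd (a b : LL n) : (a * b).2 = a.2 + b.2 := rfl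
lemma LLaux.mul_fst (a b : LL n) :
    (a * b).1 = symmDiff a.1 (b.1.image (fun h => h - a.2)) := rfl
lemma LLaux.one_def : (1 : LL n) = (∅, 0) := rfl
lemma LLaux.inv_def (a : LL n) : a⁻¹ = (a.1.image (fun h => h + a.2), -a.2) := rfl

open LLaux

lemma LLaux.mem_genT {g : LL n} (h : g ∈ lampGens n ∪ (lampGens n)⁻¹) :
    g = (({0} : Finset (ZMod n)), 0) ∨ g = (∅, 1) ∨ g = (∅, -1) := by
  rcases h with (h | h) | (h | h)
  · exact Or.inl h
  · exact Or.inr (Or.inl h)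
  · left
    have : g = ((({0} : Finset (ZMod n)), (0:ZMod n)))⁻¹ := by rw [← h]; simp
    rw [this, inv_def]; simp
  · right; right
    have : g = (((∅ : Finset (ZMod n)), (1:ZMod n)))⁻¹ := by rw [← h]; simp
    rw [this, inv_def]; simp

lemma LLaux.inv_mem_genT {g : LL n} (h : g ∈ lampGens n ∪ (lampGens n)⁻¹) :
    g⁻¹ ∈ lampGens n ∪ (lampGens n)⁻¹ := by
  rcases mem_genT h with h | h | h <;> subst h
  · left; left; rw [inv_def]; simp
  · right
    show (((∅:Finset (ZMod n)), (1:ZMod n))⁻¹)⁻¹ ∈ lampGens n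
    rw [inv_inv]; exact Or.inr rfl
  · left; right
    rw [inv_def]; simp

/-- prefix-position bound -/
lemma LLaux.listA : ∀ l : List (LL n), (∀ g ∈ l, g ∈ lampGens n ∪ (lampGens n)⁻¹) →
    ∃ a : ℤ, a.natAbs ≤ l.length ∧ (a : ZMod n) = l.prod.2 := by
  intro l
  induction l with
  | nil => intro _; exact ⟨0, by simp [one_def]⟩
  | cons g l ih =>
    intro hmem
    obtain ⟨a, ha1, ha2⟩ := ih (fun x hx => hmem x (List.mem_cons_of_mem _ hx))
    have hg := hmem g List.mem_cons_self
    have : ∃ e : ℤ, e.natAbs ≤ 1 ∧ (e : ZMod n) = g.2 := by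
      rcases mem_genT hg with h | h | h <;> subst h
      · exact ⟨0, by simp⟩
      · exact ⟨1, by simp⟩
      · exact ⟨-1, by simp⟩
    obtain ⟨e, he1, he2⟩ := this
    refine ⟨e + a, ?_, ?_⟩
    · calc (e + a).natAbs ≤ e.natAbs + a.natAbs := Int.natAbs_add_le _ _
        _ ≤ 1 + l.length := Nat.add_le_add he1 ha1
        _ = (g :: l).length := by simp [add_comm]
    · rw [List.prod_cons, mul_snd]
      push_cast
      rw [he2, ha2]

lemma LLaux.listB : ∀ l : List (LL n), (∀ g ∈ l, g ∈ lampGens n ∪ (lampGens n)⁻¹) →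
    ∀ k ∈ l.prod.1, ∃ i, i < l.length ∧ ((l.take i).prod).2 = -k := by
  intro l
  induction l with
  | nil => intro _ k hk; simp [one_def] at hk
  | cons g l ih =>
    intro hmem k hk
    rw [List.prod_cons, mul_fst, Finset.mem_symmDiff] at hk
    have hg := hmem g List.mem_cons_self
    rcases hk with ⟨hk, -⟩ | ⟨hk, -⟩
    · -- k lit by g itself: g = ({0},0), k = 0
      have hgeq : g = ((({0}:Finset (ZMod n)), (0:ZMod n))) := by
        rcases mem_genT hg with h | h | h <;> subst h <;> simp_all
      subst hgeq
      simp only [Finset.mem_singleton] at hk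
      exact ⟨0, by simp, by simp [one_def, hk]⟩
    · rw [Finset.mem_image] at hk
      obtain ⟨h, hh, rfl⟩ := hk
      obtain ⟨i, hi, hpos⟩ := ih (fun x hx => hmem x (List.mem_cons_of_mem _ hx)) h hh
      refine ⟨i + 1, by simpa using hi, ?_⟩
      rw [List.take_succ_cons, List.prod_cons, mul_snd, hpos]
      ring

lemma LLaux.cycDist_le {k : ZMod n} {m : ℕ}
    (h : ∃ a : ℤ, a.natAbs ≤ m ∧ (a : ZMod n) = -k) :
    sInf {m' : ℕ | ∃ a : ℤ, a.natAbs = m' ∧ (a : ZMod n) = (0:ZMod n) - k} ≤ m := by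
  obtain ⟨a, ha1, ha2⟩ := h
  exact le_trans (Nat.sInf_le ⟨a, rfl, by rw [ha2]; ring⟩) ha1

/-- generation -/
lemma LLaux.exists_word (hn : 1 ≤ n) (g : LL n) :
    ∃ l : List (LL n), (∀ y ∈ l, y ∈ lampGens n ∪ (lampGens n)⁻¹) ∧ l.prod = g := by
  haveI : NeZero n := ⟨by omega⟩
  apply Submonoid.exists_list_of_mem_closure
  set T : Set (LL n) := lampGens n ∪ (lampGens n)⁻¹ with hT
  have hs2 : ((∅:Finset (ZMod n)), (1:ZMod n)) ∈ Submonoid.closure T :=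
    Submonoid.subset_closure (Or.inl (Or.inr rfl))
  have hs1 : ((({0}:Finset (ZMod n))), (0:ZMod n)) ∈ Submonoid.closure T :=
    Submonoid.subset_closure (Or.inl (Or.inl rfl))
  have hemul : ∀ p q : ZMod n, ((∅:Finset (ZMod n)), p) * ((∅:Finset (ZMod n)), q)
      = ((∅:Finset (ZMod n)), p + q) := by
    intro p q
    refine Prod.ext ?_ rfl
    rw [mul_fst]; simp
  have hpow : ∀ m : ℕ, ((∅:Finset (ZMod n)), (1:ZMod n)) ^ m
      = ((∅:Finset (ZMod n)), (m : ZMod n)) := by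
    intro m
    induction m with
    | zero => simp [one_def]
    | succ m ih => rw [pow_succ, ih, hemul]; push_cast; rfl
  have hpos : ∀ p : ZMod n, ((∅:Finset (ZMod n)), p) ∈ Submonoid.closure T := by
    intro p
    have := pow_mem hs2 p.val
    rwa [hpow, ZMod.natCast_zmod_val] at this
  have hlamp : ∀ k : ZMod n, ((({k}:Finset (ZMod n))), (0:ZMod n)) ∈ Submonoid.closure T := by
    intro k
    have key : ((∅:Finset (ZMod n)), -k) * ((({0}:Finset (ZMod n))), (0:ZMod n))
        * ((∅:Finset (ZMod n)), k) = ((({k}:Finset (ZMod n))), (0:ZMod n)) := by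
      refine Prod.ext ?_ ?_
      · rw [mul_fst, mul_fst, mul_snd]
        simp
      · simp [mul_snd]
    rw [← key]
    exact mul_mem (mul_mem (hpos _) hs1) (hpos _)
  have hset : ∀ x : Finset (ZMod n), ((x, (0:ZMod n)) : LL n) ∈ Submonoid.closure T := by
    intro x
    induction x using Finset.induction_on with
    | empty => rw [← one_def]; exact one_mem _
    | @insert k y hky ih =>
      have key : ((({k}:Finset (ZMod n))), (0:ZMod n)) * ((y, (0:ZMod n)) : LL n)
          = ((insert k y, (0:ZMod n)) : LL n) := by
        refine Prod.ext ?_ (by rw [mul_snd]; ring)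
        rw [mul_fst]
        simp only [sub_zero]
        rw [Finset.image_id']
        ext t
        rw [Finset.mem_symmDiff]
        simp only [Finset.mem_singleton, Finset.mem_insert]
        constructor
        · rintro (⟨rfl, -⟩ | ⟨ht, -⟩) <;> tauto
        · rintro (rfl | ht)
          · exact Or.inl ⟨rfl, hky⟩
          · exact Or.inr ⟨ht, fun he => hky (he ▸ ht)⟩
      rw [← key]
      exact mul_mem (hlamp k) ih
  have key : ((g.1, (0:ZMod n)) : LL n) * ((∅:Finset (ZMod n)), g.2) = g := by
    refine Prod.ext ?_ (by rw [mul_snd]; ring)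
    rw [mul_fst]; simp
  rw [← key]
  exact mul_mem (hset _) (hpos _)

end Aux


/-- The word metric is at least `d_{Cₙ}(0,j)`, and at least
`d_{Cₙ}(0,k) + 1` for every lit lamp `k ∈ x`. -/
theorem lamplighter_word_metric_lower :
    ∀ n : ℕ, 1 ≤ n → ∀ (x : Finset (ZMod n)) (j : ZMod n),
      cycDist n 0 j ≤ lampRho n (x, j) ((∅ : Finset (ZMod n)), (0 : ZMod n)) ∧
        ∀ k ∈ x, cycDist n 0 k + 1 ≤
          lampRho n (x, j) ((∅ : Finset (ZMod n)), (0 : ZMod n)) := by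
  intro n hn x j
  unfold lampRho wordDist
  set T : Set (LL n) := lampGens n ∪ (lampGens n)⁻¹ with hT
  set S : Set ℕ := {L : ℕ | ∃ l : List (LL n), l.length = L ∧ (∀ g ∈ l, g ∈ T) ∧
      l.prod = ((x, j) : LL n)⁻¹ * ((∅ : Finset (ZMod n)), (0 : ZMod n))} with hS
  have hSne : S.Nonempty := by
    obtain ⟨l, hmem, hprod⟩ := LLaux.exists_word hn
      (((x, j) : LL n)⁻¹ * ((∅ : Finset (ZMod n)), (0 : ZMod n)))
    exact ⟨l.length, l, rfl, hmem, hprod⟩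
  have key : ∀ L ∈ S, cycDist n 0 j ≤ L ∧ ∀ k ∈ x, cycDist n 0 k + 1 ≤ L := by
    intro L hL
    obtain ⟨l, hlen, hmem, hprod⟩ := hL
    have h1 : ((∅ : Finset (ZMod n)), (0 : ZMod n)) = (1 : LL n) := rfl
    rw [h1, mul_one] at hprod
    set l' : List (LL n) := (l.map fun g => g⁻¹).reverse with hl'
    have hlen' : l'.length = L := by simp [hl', hlen]
    have hmem' : ∀ g ∈ l', g ∈ T := by
      intro g hg
      rw [hl', List.mem_reverse, List.mem_map] at hg
      obtain ⟨y, hy, rfl⟩ := hg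
      exact LLaux.inv_mem_genT (hmem y hy)
    have hprod' : l'.prod = ((x, j) : LL n) := by
      rw [hl', ← List.prod_inv_reverse, hprod, inv_inv]
    constructor
    · obtain ⟨a, ha1, ha2⟩ := LLaux.listA l' hmem'
      rw [hprod'] at ha2
      unfold cycDist
      refine LLaux.cycDist_le ⟨-a, ?_, ?_⟩
      · rw [Int.natAbs_neg]; omega
      · push_cast; rw [ha2]
    · intro k hk
      have hk' : k ∈ (l'.prod).1 := by rw [hprod']; exact hk
      obtain ⟨i, hi, hpos⟩ := LLaux.listB l' hmem' k hk'
      obtain ⟨a, ha1, ha2⟩ := LLaux.listA (l'.take i)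
        (fun g hg => hmem' g (List.mem_of_mem_take hg))
      rw [hpos] at ha2
      have : cycDist n 0 k ≤ i := by
        unfold cycDist
        refine LLaux.cycDist_le ⟨a, ?_, ha2⟩
        calc a.natAbs ≤ (l'.take i).length := ha1
          _ ≤ i := by simp
      omega
  constructor
  · exact le_csInf hSne fun L hL => (key L hL).1
  · intro k hk
    exact le_csInf hSne fun L hL => (key L hL).2 k hk
end

section
/- For every n ≥ 1 and every nonempty finite subset x of ZMod n, the word metric on the lamplighter group satisfies ρ((x, 0), (∅, 0)) ≤ 6·max_{k ∈ x} (d_{Cₙ}(0, k) + 1). -/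
open Finset

namespace Aux
variable {n : ℕ}

def s1 (n : ℕ) : LL n := ({0}, 0)
def s2 (n : ℕ) : LL n := (∅, 1)

lemma mul_def (a b : LL n) : a * b = LL.gmul a b := rfl
lemma one_def : (1 : LL n) = (∅, 0) := rfl
lemma inv_def (a : LL n) : a⁻¹ = LL.ginv a := rfl

lemma s2_pow (m : ℕ) : (s2 n) ^ m = (∅, (m : ZMod n)) := by
  induction m with
  | zero => simp [one_def]
  | succ k ih =>
    rw [pow_succ, ih, mul_def]
    unfold LL.gmul s2
    refine Prod.ext ?_ (by push_cast; ring)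
    simp only [Finset.image_empty]
    exact symmDiff_self _

lemma s2_zpow (c : ℤ) : (s2 n) ^ c = (∅, (c : ZMod n)) := by
  obtain ⟨m, rfl | rfl⟩ := Int.eq_nat_or_neg c
  · rw [zpow_natCast, s2_pow]; push_cast; rfl
  · rw [zpow_neg, zpow_natCast, s2_pow, inv_def]
    unfold LL.ginv
    refine Prod.ext (by simp) (by push_cast; ring)

def tz (n : ℕ) (c : ℤ) : LL n := ({(c : ZMod n)}, 0)

lemma tz_eq (c : ℤ) : tz n c = (s2 n) ^ (-c) * s1 n * (s2 n) ^ c := by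
  rw [s2_zpow, s2_zpow, mul_def, mul_def]
  unfold LL.gmul s1 tz
  refine Prod.ext ?_ (by push_cast; ring)
  simp only [Finset.image_empty, Finset.image_singleton, zero_sub, sub_neg_eq_add]
  ext a
  simp [Finset.mem_symmDiff]


def gens (n : ℕ) : Set (LL n) := lampGens n ∪ (lampGens n)⁻¹

def W (n : ℕ) (L : ℕ) (g : LL n) : Prop :=
  ∃ l : List (LL n), l.length = L ∧ (∀ a ∈ l, a ∈ gens n) ∧ l.prod = g

lemma W_mul {L L' : ℕ} {g h : LL n} (hg : W n L g) (hh : W n L' h) :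
    W n (L + L') (g * h) := by
  obtain ⟨l, hl, hm, hp⟩ := hg
  obtain ⟨l', hl', hm', hp'⟩ := hh
  refine ⟨l ++ l', by simp [hl, hl'], ?_, by rw [List.prod_append, hp, hp']⟩
  intro a ha
  rcases List.mem_append.1 ha with h | h
  exacts [hm a h, hm' a h]

lemma W_s1 : W n 1 (s1 n) :=
  ⟨[s1 n], rfl, by intro a ha; simp at ha; subst ha; exact Or.inl (Or.inl rfl), by simp⟩

lemma s1_mem : s1 n ∈ gens n := Or.inl (Or.inl rfl)
lemma s2_mem : s2 n ∈ gens n := Or.inl (Or.inr rfl)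
lemma s2inv_mem : (s2 n)⁻¹ ∈ gens n := Or.inr (by rw [Set.mem_inv, inv_inv]; exact Or.inr rfl)

lemma W_s2_zpow (c : ℤ) : W n c.natAbs ((s2 n) ^ c) := by
  obtain ⟨m, rfl | rfl⟩ := Int.eq_nat_or_neg c
  · exact ⟨List.replicate m (s2 n), by simp, by intro a ha
                                                rw [List.eq_of_mem_replicate ha]
                                                exact s2_mem,
          by rw [List.prod_replicate, zpow_natCast]⟩
  · refine ⟨List.replicate m (s2 n)⁻¹, by simp, ?_, ?_⟩
    · intro a ha; rw [List.eq_of_mem_replicate ha]; exact s2inv_mem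
    · rw [List.prod_replicate, inv_pow, ← zpow_natCast, ← zpow_neg]

def E (n : ℕ) : ℤ → List ℤ → LL n
  | _, [] => 1
  | p, c :: t => (s2 n) ^ (p - c) * s1 n * E n c t

def cost : ℤ → List ℤ → ℕ
  | _, [] => 0
  | p, c :: t => (p - c).natAbs + 1 + cost c t

def lastP : ℤ → List ℤ → ℤ
  | p, [] => p
  | _, c :: t => lastP c t

lemma W_E (cs : List ℤ) : ∀ p : ℤ, W n (cost p cs) (E n p cs) := by
  induction cs with
  | nil => intro p; exact ⟨[], rfl, by simp, rfl⟩
  | cons c t ih =>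
    intro p
    exact W_mul (W_mul (W_s2_zpow (p - c)) W_s1) (ih c)

lemma E_eq (cs : List ℤ) : ∀ p : ℤ,
    E n p cs = (s2 n) ^ p * (cs.map (tz n)).prod * (s2 n) ^ (-(lastP p cs)) := by
  induction cs with
  | nil => intro p; simp [E, lastP, ← zpow_add]
  | cons c t ih =>
    intro p
    show (s2 n) ^ (p - c) * s1 n * E n c t = _
    rw [ih c, List.map_cons, List.prod_cons, tz_eq]
    show _ = _ * _ * _ ^ (-(lastP c t))
    rw [sub_eq_add_neg, zpow_add]
    group

lemma lastP_mem (t : List ℤ) : ∀ c : ℤ, lastP c t ∈ c :: t := by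
  induction t with
  | nil => intro c; simp [lastP]
  | cons d t' ih =>
    intro c
    show lastP d t' ∈ _
    rcases List.mem_cons.1 (ih d) with h | h
    · rw [h]; right; exact List.mem_cons_self
    · right; right; exact h

lemma le_lastP (t : List ℤ) : ∀ c : ℤ, List.Chain (· ≤ ·) c t → c ≤ lastP c t := by
  induction t with
  | nil => intro c _; exact le_refl _
  | cons d t' ih =>
    intro c hch
    rcases hch with ⟨⟩
    next h hch' => exact le_trans h (ih d hch')

lemma cost_le (t : List ℤ) : ∀ c : ℤ, List.Chain (· ≤ ·) c t →
    cost c t ≤ (lastP c t - c).toNat + t.length := by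
  induction t with
  | nil => intro c _; simp [cost, lastP]
  | cons d t' ih =>
    intro c hch
    rcases hch with ⟨⟩
    next h hch' =>
    have h1 := ih d hch'
    have h2 := le_lastP t' d hch'
    show (c - d).natAbs + 1 + cost d t' ≤ (lastP d t' - c).toNat + (t'.length + 1)
    omega

lemma prod_tz (l : List ℤ) (hl : (l.map (Int.cast : ℤ → ZMod n)).Nodup) :
    (l.map (tz n)).prod = ((l.map (Int.cast : ℤ → ZMod n)).toFinset, 0) := by
  induction l with
  | nil => simp [one_def]
  | cons c t ih =>
    rw [List.map_cons, List.map_cons, List.nodup_cons] at *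
    rw [List.prod_cons, ih hl.2, mul_def]
    unfold LL.gmul tz
    refine Prod.ext ?_ (by simp)
    simp only [sub_zero, Finset.image_id']
    ext a
    have hc : (c : ZMod n) ∉ (t.map (Int.cast : ℤ → ZMod n)).toFinset := by
      simpa using hl.1
    simp only [Finset.mem_symmDiff, Finset.mem_singleton, List.toFinset_cons,
      Finset.mem_insert]
    constructor
    · rintro (⟨rfl, -⟩ | ⟨h1, h2⟩)
      · exact Or.inl rfl
      · exact Or.inr h1
    · rintro (rfl | h)
      · exact Or.inl ⟨rfl, fun hh => hc hh⟩
      · exact Or.inr ⟨h, fun hh => hc (hh ▸ h)⟩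


lemma inv_target (x : Finset (ZMod n)) :
    ((x, (0 : ZMod n)) : LL n)⁻¹ * ((∅ : Finset (ZMod n)), (0 : ZMod n)) = (x, 0) := by
  rw [inv_def, mul_def]
  unfold LL.ginv LL.gmul
  refine Prod.ext ?_ (by simp)
  simp only [Finset.image_empty, add_zero, Finset.image_id']
  exact symmDiff_bot x

end Aux

/-- For nonempty `x`, `ρ((x, 0), (∅, 0)) ≤ 6·max_{k ∈ x} (d_{Cₙ}(0,k)+1)`. -/
theorem lamplighter_word_metric_upper :
    ∀ n : ℕ, 1 ≤ n → ∀ x : Finset (ZMod n), x.Nonempty →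
      lampRho n (x, (0 : ZMod n)) ((∅ : Finset (ZMod n)), (0 : ZMod n)) ≤
        6 * x.sup (fun k => cycDist n 0 k + 1) := by
  intro n hn x hx
  haveI : NeZero n := ⟨by omega⟩
  open Aux in
  set M := x.sup (fun k => cycDist n 0 k + 1) with hM
  have hM1 : 1 ≤ M := by
    obtain ⟨k, hk⟩ := hx
    calc 1 ≤ cycDist n 0 k + 1 := by omega
      _ ≤ M := Finset.le_sup (f := fun k => cycDist n 0 k + 1) hk
  have hrep : ∀ k : ZMod n, ∃ a : ℤ, a.natAbs = cycDist n 0 k ∧ (a : ZMod n) = k := by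
    intro k
    have hne : {m : ℕ | ∃ a : ℤ, a.natAbs = m ∧ (a : ZMod n) = 0 - k}.Nonempty := by
      refine ⟨(((0 - k).val : ℤ)).natAbs, ((0 - k).val : ℤ), rfl, ?_⟩
      push_cast
      rw [ZMod.natCast_val, ZMod.cast_id]
    obtain ⟨a, ha1, ha2⟩ := Nat.sInf_mem hne
    refine ⟨-a, ?_, ?_⟩
    · rw [Int.natAbs_neg]
      exact ha1
    · push_cast
      rw [ha2]
      ring
  choose rep hrep1 hrep2 using hrep
  set B := M - 1 with hB
  have hrepB : ∀ k ∈ x, (rep k).natAbs ≤ B := by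
    intro k hk
    have h2 : cycDist n 0 k + 1 ≤ M := Finset.le_sup (f := fun k => cycDist n 0 k + 1) hk
    have h3 := hrep1 k
    omega
  set S : Finset ℤ := x.image rep with hS
  set cs : List ℤ := S.sort (· ≤ ·) with hcs
  have hmemS : ∀ c ∈ cs, c ∈ S := fun c h => (Finset.mem_sort _).1 h
  have hcsB : ∀ c ∈ cs, c.natAbs ≤ B := by
    intro c hc
    obtain ⟨k, hk, rfl⟩ := Finset.mem_image.1 (hmemS c hc)
    exact hrepB k hk
  have hnodupZ : (cs.map (Int.cast : ℤ → ZMod n)).Nodup := by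
    refine (Finset.sort_nodup _ _).map_on ?_
    intro a ha b hb hab
    obtain ⟨k, hk, rfl⟩ := Finset.mem_image.1 ((Finset.mem_sort _).1 ha)
    obtain ⟨k', hk', rfl⟩ := Finset.mem_image.1 ((Finset.mem_sort _).1 hb)
    rw [hrep2, hrep2] at hab
    rw [hab]
  have htoF : ((cs.map (Int.cast : ℤ → ZMod n)).toFinset) = x := by
    ext a
    simp only [List.mem_toFinset, List.mem_map]
    constructor
    · rintro ⟨c, hc, rfl⟩
      obtain ⟨k, hk, rfl⟩ := Finset.mem_image.1 (hmemS c hc)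
      rw [hrep2]
      exact hk
    · intro ha
      exact ⟨rep a, (Finset.mem_sort _).2 (Finset.mem_image_of_mem _ ha), hrep2 a⟩
  have hlen : cs.length ≤ 2 * B + 1 := by
    rw [hcs, Finset.length_sort]
    have hsub : S ⊆ Finset.Icc (-(B : ℤ)) (B : ℤ) := by
      intro c hc
      obtain ⟨k, hk, rfl⟩ := Finset.mem_image.1 hc
      have := hrepB k hk
      rw [Finset.mem_Icc]
      omega
    calc S.card ≤ (Finset.Icc (-(B : ℤ)) (B : ℤ)).card := Finset.card_le_card hsub
      _ = 2 * B + 1 := by rw [Int.card_Icc]; omega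
  have hcsne : cs ≠ [] := by
    intro h
    have h2 : S.Nonempty := hx.image rep
    have hcard : S.card = 0 := by
      rw [← Finset.length_sort (· ≤ ·), ← hcs, h]
      rfl
    exact h2.ne_empty (Finset.card_eq_zero.1 hcard)
  obtain ⟨c, t, hct⟩ := List.exists_cons_of_ne_nil hcsne
  have hsorted : List.Pairwise (· ≤ ·) cs := Finset.pairwise_sort _ _
  have hchain : List.Chain (· ≤ ·) c t := by
    have h := List.isChain_iff_pairwise.2 (hct ▸ hsorted)
    exact h
  have hW : W n (cost 0 cs + (lastP c t).natAbs) ((x, (0 : ZMod n)) : LL n) := by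
    have h := W_mul (W_E (n := n) cs 0) (W_s2_zpow (n := n) (lastP c t))
    rw [E_eq] at h
    have hlast0 : lastP 0 cs = lastP c t := by rw [hct]; rfl
    rw [hlast0, zpow_zero, one_mul, mul_assoc, ← zpow_add, neg_add_cancel,
      zpow_zero, mul_one, prod_tz cs hnodupZ, htoF] at h
    exact h
  have hle : lampRho n (x, (0 : ZMod n)) ((∅ : Finset (ZMod n)), (0 : ZMod n)) ≤
      cost 0 cs + (lastP c t).natAbs := by
    apply Nat.sInf_le
    obtain ⟨l, h1, h2, h3⟩ := hW
    exact ⟨l, h1, h2, by rw [h3, inv_target]⟩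
  refine le_trans hle ?_
  have hcostle := cost_le t c hchain
  have hLB : (lastP c t).natAbs ≤ B := hcsB _ (hct ▸ lastP_mem t c)
  have hcB : c.natAbs ≤ B := hcsB c (by rw [hct]; exact List.mem_cons_self)
  have hlen' : t.length + 1 ≤ 2 * B + 1 := by
    rw [hct] at hlen
    simpa using hlen
  have hc0 : cost 0 cs = (0 - c).natAbs + 1 + cost c t := by rw [hct]; rfl
  omega
end

section
/- There exists a universal constant C > 0 such that for every n ≥ 3: Σ_{I ∈ 𝓘} Σ_{A ⊆ I} Σ_{k ∈ ZMod n} (v^I_{k+1} − v^I_k)² ≤ C·log n, where log is the natural logarithm. -/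
open Finset

/-- The arc `{a, a+1, …, a + (⌊n/3⌋ - 1)}` of length `m = ⌊n/3⌋` in `ZMod n`.
As `a` ranges over `ZMod n` this produces the family `𝓘` of all `n` such arcs. -/
def arc (n : ℕ) (a : ZMod n) : Finset (ZMod n) :=
  (Finset.range (n / 3)).image (fun i : ℕ => a + (i : ZMod n))

/-- distance from a point `k` to the arc starting at `a`: `min_{i ∈ I} d_{Cₙ}(k, i)`. -/
noncomputable def dArc (n : ℕ) (a k : ZMod n) : ℕ :=
  sInf {m : ℕ | ∃ i ∈ arc n a, cycDist n k i = m}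

/-- `η = 1 / (n · 2^{n/6})`. -/
noncomputable def eta (n : ℕ) : ℝ := 1 / ((n : ℝ) * (2 : ℝ) ^ ((n : ℝ) / 6))

/-- `δ = 1 / (√n · 2^{n/6})`. -/
noncomputable def dlt (n : ℕ) : ℝ := 1 / (Real.sqrt n * (2 : ℝ) ^ ((n : ℝ) / 6))

/-- The vector `v^I` attached to the arc `I` starting at `a`:
`v^I_k = η` for `k ∈ I` and `v^I_k = δ·√(d(k, I))` for `k ∉ I`. -/
noncomputable def vI (n : ℕ) (a k : ZMod n) : ℝ :=
  if k ∈ arc n a then eta n else dlt n * Real.sqrt (dArc n a k)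


section Aux

open Real

lemma cycDist_eq (n : ℕ) [NeZero n] (j k : ZMod n) :
    cycDist n j k = min (j - k).val (n - (j - k).val) := by
  set v := (j - k).val with hv
  have hvlt : v < n := ZMod.val_lt _
  have hmem : min v (n - v) ∈ {m : ℕ | ∃ a : ℤ, a.natAbs = m ∧ (a : ZMod n) = j - k} := by
    rcases le_total v (n - v) with h | h
    · refine ⟨(v : ℤ), by simp [min_eq_left h], ?_⟩
      simp [hv, ZMod.natCast_val, ZMod.cast_id]
    · refine ⟨(v : ℤ) - n, ?_, ?_⟩
      · rw [min_eq_right h]; omega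
      · push_cast
        simp [hv, ZMod.natCast_val, ZMod.cast_id, ZMod.natCast_self]
  have hlb : ∀ x ∈ {m : ℕ | ∃ a : ℤ, a.natAbs = m ∧ (a : ZMod n) = j - k},
      min v (n - v) ≤ x := by
    rintro x ⟨a, rfl, ha⟩
    have : (a : ZMod n) = ((v : ℤ) : ZMod n) := by
      rw [ha]; push_cast; simp [hv, ZMod.natCast_val, ZMod.cast_id]
    rw [ZMod.intCast_eq_intCast_iff] at this
    have hd : (n : ℤ) ∣ a - v := (Int.ModEq.dvd this.symm)
    rcases hd with ⟨q, hq⟩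
    have hn : 0 < (n:ℤ) := by exact_mod_cast (NeZero.pos n)
    rcases lt_trichotomy q 0 with hq0 | hq0 | hq0
    · have : (n:ℤ) * q ≤ -n := by nlinarith
      omega
    · subst hq0; omega
    · have : (n:ℤ) ≤ (n:ℤ) * q := by nlinarith
      omega
  unfold cycDist
  exact le_antisymm (Nat.sInf_le hmem) (hlb _ (Nat.sInf_mem ⟨_, hmem⟩))

lemma mem_arc_iff (n : ℕ) [NeZero n] (a : ZMod n) (t : ℕ) (ht : t < n) :
    (a + (t : ZMod n)) ∈ arc n a ↔ t < n / 3 := by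
  constructor
  · intro h
    simp only [arc, mem_image, mem_range] at h
    obtain ⟨i, hi, hit⟩ := h
    have : (i : ZMod n) = (t : ZMod n) := by
      have := add_left_cancel hit; exact this
    have := congrArg ZMod.val this
    rw [ZMod.val_cast_of_lt (by omega), ZMod.val_cast_of_lt ht] at this
    omega
  · intro h
    simp only [arc, mem_image, mem_range]
    exact ⟨t, h, rfl⟩

lemma card_arc (n : ℕ) [NeZero n] (a : ZMod n) : (arc n a).card = n / 3 := by
  rw [arc, Finset.card_image_of_injOn, Finset.card_range]
  intro i hi j hj hij
  simp only [mem_coe, mem_range] at hi hj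
  have : (i : ZMod n) = (j : ZMod n) := add_left_cancel hij
  have := congrArg ZMod.val this
  rwa [ZMod.val_cast_of_lt (by omega), ZMod.val_cast_of_lt (by omega)] at this

lemma cycDist_shift (n : ℕ) [NeZero n] (a : ZMod n) (t i : ℕ) (hi : i ≤ t) (ht : t < n) :
    cycDist n (a + (t : ZMod n)) (a + (i : ZMod n)) = min (t - i) (n - (t - i)) := by
  rw [cycDist_eq]
  have h1 : (a + (t : ZMod n)) - (a + (i : ZMod n)) = ((t - i : ℕ) : ZMod n) := by
    push_cast [Nat.cast_sub hi]; ring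
  rw [h1, ZMod.val_cast_of_lt (by omega)]

lemma dArc_eq (n : ℕ) [NeZero n] (a : ZMod n) (t : ℕ) (h3 : 3 ≤ n)
    (ht1 : n / 3 ≤ t) (ht2 : t < n) :
    dArc n a (a + (t : ZMod n)) = min (t + 1 - n / 3) (n - t) := by
  set m := n / 3 with hm
  have hm1 : 1 ≤ m := by omega
  have hmn : m < n := by omega
  set S := {d : ℕ | ∃ i ∈ arc n a, cycDist n (a + (t : ZMod n)) i = d} with hS
  have keyval : ∀ i < m, cycDist n (a + (t : ZMod n)) (a + (i : ZMod n))
      = min (t - i) (n - (t - i)) := fun i hi => cycDist_shift n a t i (by omega) ht2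
  have hmem : min (t + 1 - m) (n - t) ∈ S := by
    rcases le_total (t + 1 - m) (n - t) with h | h
    · refine ⟨a + ((m - 1 : ℕ) : ZMod n), ?_, ?_⟩
      · rw [mem_arc_iff n a _ (by omega)]; omega
      · rw [keyval (m-1) (by omega)]; omega
    · refine ⟨a + ((0 : ℕ) : ZMod n), ?_, ?_⟩
      · rw [mem_arc_iff n a _ (by omega)]; omega
      · rw [keyval 0 (by omega)]; omega
  have hlb : ∀ x ∈ S, min (t + 1 - m) (n - t) ≤ x := by
    rintro x ⟨i, hiarc, rfl⟩
    simp only [arc, mem_image, mem_range] at hiarc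
    obtain ⟨i', hi', rfl⟩ := hiarc
    rw [keyval i' hi']
    omega
  exact le_antisymm (Nat.sInf_le hmem) (hlb _ (Nat.sInf_mem ⟨_, hmem⟩))

lemma sqrt_sub_sq_le {x y : ℝ} (hx : 1 ≤ x) (hxy : x ≤ y) (hyx : y ≤ x + 1) :
    (Real.sqrt y - Real.sqrt x) ^ 2 ≤ 1 / x := by
  have hx0 : (0:ℝ) ≤ x := by linarith
  have hy0 : (0:ℝ) ≤ y := by linarith
  have hprod : (Real.sqrt y - Real.sqrt x) * (Real.sqrt y + Real.sqrt x) = y - x := by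
    have := Real.sq_sqrt hx0
    have := Real.sq_sqrt hy0
    ring_nf
    nlinarith [Real.sq_sqrt hx0, Real.sq_sqrt hy0]
  have hsx := Real.sqrt_nonneg x
  have hsy := Real.sqrt_nonneg y
  have hkey : (Real.sqrt y - Real.sqrt x) ^ 2 * x ≤ 1 := by
    have h1 : (Real.sqrt y - Real.sqrt x) ^ 2 * x ≤
        (Real.sqrt y - Real.sqrt x) ^ 2 * (Real.sqrt y + Real.sqrt x) ^ 2 := by
      apply mul_le_mul_of_nonneg_left _ (sq_nonneg _)
      nlinarith [Real.sq_sqrt hx0, Real.sq_sqrt hy0]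
    have h2 : (Real.sqrt y - Real.sqrt x) ^ 2 * (Real.sqrt y + Real.sqrt x) ^ 2
        = (y - x) ^ 2 := by rw [← mul_pow, hprod]
    nlinarith
  rw [le_div_iff₀ (by linarith : (0:ℝ) < x)]
  linarith

lemma sqrt_nat_sub_sq_le (x y : ℕ) (hx : 1 ≤ x) (hy : 1 ≤ y)
    (h1 : x ≤ y + 1) (h2 : y ≤ x + 1) :
    (Real.sqrt y - Real.sqrt x) ^ 2 ≤ 1 / (min x y : ℕ) := by
  rcases le_total x y with h | h
  · rw [min_eq_left h]
    have : (y:ℝ) ≤ (x:ℝ) + 1 := by exact_mod_cast h2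
    exact sqrt_sub_sq_le (by exact_mod_cast hx) (by exact_mod_cast h) this
  · rw [min_eq_right h, show (Real.sqrt ↑y - Real.sqrt ↑x)^2 = (Real.sqrt ↑x - Real.sqrt ↑y)^2 by ring]
    have : (x:ℝ) ≤ (y:ℝ) + 1 := by exact_mod_cast h1
    exact sqrt_sub_sq_le (by exact_mod_cast hy) (by exact_mod_cast h) this

lemma eta_pos (n : ℕ) (hn : 0 < n) : 0 < eta n := by
  unfold eta; positivity

lemma dlt_pos (n : ℕ) (hn : 0 < n) : 0 < dlt n := by
  unfold dlt
  have : (0:ℝ) < Real.sqrt n := Real.sqrt_pos.mpr (by exact_mod_cast hn)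
  positivity

lemma eta_le_dlt (n : ℕ) (hn : 1 ≤ n) : eta n ≤ dlt n := by
  unfold eta dlt
  have h1 : (1:ℝ) ≤ (n:ℝ) := by exact_mod_cast hn
  have h2 : Real.sqrt n ≤ (n:ℝ) := by
    nlinarith [Real.sqrt_nonneg (n:ℝ), Real.sq_sqrt (show (0:ℝ) ≤ (n:ℝ) by positivity)]
  have h3 : (0:ℝ) < Real.sqrt n := Real.sqrt_pos.mpr (by linarith)
  have h4 : (0:ℝ) < (2:ℝ) ^ ((n:ℝ)/6) := by positivity
  apply one_div_le_one_div_of_le (by positivity)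
  exact mul_le_mul_of_nonneg_right h2 h4.le

lemma per_arc (n : ℕ) [NeZero n] (h3 : 3 ≤ n) (a : ZMod n) :
    (∑ k : ZMod n, (vI n a (k + 1) - vI n a k) ^ 2)
      ≤ dlt n ^ 2 * (4 + 2 * Real.log n) := by
  set m := n / 3 with hm
  have hm1 : 1 ≤ m := by omega
  have hmn : m + 2 ≤ n := by omega
  set W : ℕ → ℝ := fun t => vI n a (a + (t : ZMod n)) with hW
  -- reindex
  have hre : (∑ k : ZMod n, (vI n a (k + 1) - vI n a k) ^ 2)
      = ∑ t ∈ range n, (W (t + 1) - W t) ^ 2 := by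
    refine Finset.sum_nbij' (fun k => (k - a).val) (fun t => a + (t : ZMod n)) ?_ ?_ ?_ ?_ ?_
    · intro k _; simp [ZMod.val_lt]
    · intro t _; simp
    · intro k _; simp [ZMod.natCast_val, ZMod.cast_id]
    · intro t ht
      simp only [mem_range] at ht
      simp [ZMod.val_cast_of_lt ht]
    · intro k _
      have h1 : a + (((k - a).val : ℕ) : ZMod n) = k := by
        simp [ZMod.natCast_val, ZMod.cast_id]
      have h2 : a + ((((k - a).val + 1 : ℕ)) : ZMod n) = k + 1 := by
        push_cast
        rw [← add_assoc, h1]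
      simp only [W, h1, h2]
  -- values of W
  have hWin : ∀ t, t < m → W t = eta n := by
    intro t ht
    simp only [W, vI, if_pos ((mem_arc_iff n a t (by omega)).mpr ht)]
  have hWout : ∀ t, m ≤ t → t < n →
      W t = dlt n * Real.sqrt ((min (t + 1 - m) (n - t) : ℕ) : ℝ) := by
    intro t ht1 ht2
    have hnot : ¬ (a + (t : ZMod n)) ∈ arc n a := by
      rw [mem_arc_iff n a t ht2]; omega
    simp only [W, vI, if_neg hnot, dArc_eq n a t h3 ht1 ht2]
    rfl
  have hWn : W n = eta n := by
    have h0 : ((n : ℕ) : ZMod n) = ((0:ℕ) : ZMod n) := by simp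
    calc W n = W 0 := by simp only [W]; rw [h0]
      _ = eta n := hWin 0 (by omega)
  rw [hre]
  set F : ℕ → ℝ := fun t => (W (t + 1) - W t) ^ 2 with hF
  have hd0 : 0 < dlt n := dlt_pos n (by omega)
  have he0 : 0 < eta n := eta_pos n (by omega)
  have hed : eta n ≤ dlt n := eta_le_dlt n (by omega)
  -- split the sum
  have e1 : ∑ t ∈ range n, F t = ∑ t ∈ range (n - 1), F t + F (n - 1) := by
    rw [← Finset.sum_range_succ]
    have h : n - 1 + 1 = n := by omega
    rw [h]
  have e2 : ∑ t ∈ range (n - 1), F t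
      = ∑ t ∈ range m, F t + ∑ t ∈ Ico m (n - 1), F t := by
    simp only [Finset.range_eq_Ico]
    exact (Finset.sum_Ico_consecutive _ (by omega : 0 ≤ m) (by omega : m ≤ n - 1)).symm
  have e3 : ∑ t ∈ range m, F t = ∑ t ∈ range (m - 1), F t + F (m - 1) := by
    rw [← Finset.sum_range_succ]
    have h : m - 1 + 1 = m := by omega
    rw [h]
  have hz : ∑ t ∈ range (m - 1), F t = 0 := by
    apply Finset.sum_eq_zero
    intro t ht
    simp only [mem_range] at ht
    simp only [hF, hWin t (by omega), hWin (t + 1) (by omega), sub_self,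
      ne_eq, OfNat.ofNat_ne_zero, not_false_eq_true, zero_pow]
  have hone : ∀ t, m ≤ t → t < n → min (t + 1 - m) (n - t) = 1 → W t = dlt n := by
    intro t h1 h2 h3
    rw [hWout t h1 h2, h3]
    norm_num
  have hb1 : F (m - 1) ≤ dlt n ^ 2 := by
    have hmm : m - 1 + 1 = m := by omega
    simp only [hF, hmm, hWin (m - 1) (by omega),
      hone m le_rfl (by omega) (by omega)]
    nlinarith
  have hb4 : F (n - 1) ≤ dlt n ^ 2 := by
    have hnn : n - 1 + 1 = n := by omega
    simp only [hF, hnn, hWn, hone (n - 1) (by omega) (by omega) (by omega)]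
    nlinarith
  have hb3 : ∀ t ∈ Ico m (n - 1),
      F t ≤ dlt n ^ 2 * (1 / ((t + 1 - m : ℕ) : ℝ) + 1 / ((n - 1 - t : ℕ) : ℝ)) := by
    intro t ht
    simp only [mem_Ico] at ht
    obtain ⟨htm, htn⟩ := ht
    set x := min (t + 1 - m) (n - t) with hx
    set y := min (t + 1 + 1 - m) (n - (t + 1)) with hy
    have hWt : W t = dlt n * Real.sqrt (x : ℝ) := hWout t htm (by omega)
    have hWt1 : W (t + 1) = dlt n * Real.sqrt (y : ℝ) := hWout (t + 1) (by omega) (by omega)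
    have hFt : F t = dlt n ^ 2 * (Real.sqrt (y : ℝ) - Real.sqrt (x : ℝ)) ^ 2 := by
      simp only [hF, hWt, hWt1]; ring
    have hsq : (Real.sqrt (y : ℝ) - Real.sqrt (x : ℝ)) ^ 2 ≤ 1 / ((min x y : ℕ) : ℝ) :=
      sqrt_nat_sub_sq_le x y (by omega) (by omega) (by omega) (by omega)
    have hmin : 1 / ((min x y : ℕ) : ℝ)
        ≤ 1 / ((t + 1 - m : ℕ) : ℝ) + 1 / ((n - 1 - t : ℕ) : ℝ) := by
      have hp1 : (0:ℝ) < ((t + 1 - m : ℕ) : ℝ) := by exact_mod_cast (by omega : 0 < t + 1 - m)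
      have hp2 : (0:ℝ) < ((n - 1 - t : ℕ) : ℝ) := by exact_mod_cast (by omega : 0 < n - 1 - t)
      have hcases : (t + 1 - m) ≤ min x y ∨ (n - 1 - t) ≤ min x y := by omega
      rcases hcases with h | h
      · have : 1 / ((min x y : ℕ) : ℝ) ≤ 1 / ((t + 1 - m : ℕ) : ℝ) :=
          one_div_le_one_div_of_le hp1 (by exact_mod_cast h)
        linarith [le_of_lt (one_div_pos.mpr hp2)]
      · have : 1 / ((min x y : ℕ) : ℝ) ≤ 1 / ((n - 1 - t : ℕ) : ℝ) :=
          one_div_le_one_div_of_le hp2 (by exact_mod_cast h)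
        linarith [le_of_lt (one_div_pos.mpr hp1)]
    rw [hFt]
    exact mul_le_mul_of_nonneg_left (hsq.trans hmin) (sq_nonneg _)
  -- the harmonic bound
  set N := n - 1 - m with hN
  have hN1 : 1 ≤ N := by omega
  have hharm : ∑ t ∈ Ico m (n - 1), (1 / ((t + 1 - m : ℕ) : ℝ) + 1 / ((n - 1 - t : ℕ) : ℝ))
      ≤ 2 * (1 + Real.log n) := by
    rw [Finset.sum_Ico_eq_sum_range]
    have hNeq : n - 1 - m = N := rfl
    have hterm : ∀ i ∈ range N, (1 / ((m + i + 1 - m : ℕ) : ℝ) + 1 / ((n - 1 - (m + i) : ℕ) : ℝ))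
        = 1 / ((i + 1 : ℕ) : ℝ) + 1 / ((N - i : ℕ) : ℝ) := by
      intro i hi
      congr 3 <;> omega
    rw [hNeq, Finset.sum_congr rfl hterm, Finset.sum_add_distrib]
    have hrefl : ∑ i ∈ range N, 1 / ((N - i : ℕ) : ℝ) = ∑ i ∈ range N, 1 / ((i + 1 : ℕ) : ℝ) := by
      rw [← Finset.sum_range_reflect (fun j => 1 / ((j + 1 : ℕ) : ℝ)) N]
      apply Finset.sum_congr rfl
      intro i hi
      simp only [mem_range] at hi
      congr 2
      omega
    have hH : ∑ i ∈ range N, 1 / ((i + 1 : ℕ) : ℝ) = (harmonic N : ℝ) := by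
      rw [harmonic]
      push_cast
      simp [one_div]
    have hlog : (harmonic N : ℝ) ≤ 1 + Real.log n := by
      refine (harmonic_le_one_add_log N).trans ?_
      have : Real.log N ≤ Real.log n := by
        apply Real.log_le_log (by exact_mod_cast hN1)
        exact_mod_cast (by omega : N ≤ n)
      linarith
    rw [hrefl, hH]
    linarith
  -- assemble
  rw [e1, e2, e3, hz, zero_add]
  have h3sum : ∑ t ∈ Ico m (n - 1), F t ≤ dlt n ^ 2 * (2 * (1 + Real.log n)) := by
    calc ∑ t ∈ Ico m (n - 1), F t
        ≤ ∑ t ∈ Ico m (n - 1), dlt n ^ 2 * (1 / ((t + 1 - m : ℕ) : ℝ) + 1 / ((n - 1 - t : ℕ) : ℝ)) :=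
          Finset.sum_le_sum hb3
      _ = dlt n ^ 2 * ∑ t ∈ Ico m (n - 1), (1 / ((t + 1 - m : ℕ) : ℝ) + 1 / ((n - 1 - t : ℕ) : ℝ)) := by
          rw [Finset.mul_sum]
      _ ≤ dlt n ^ 2 * (2 * (1 + Real.log n)) :=
          mul_le_mul_of_nonneg_left hharm (sq_nonneg _)
  have hlogn : 0 ≤ Real.log n := Real.log_nonneg (by exact_mod_cast (by omega : 1 ≤ n))
  nlinarith [sq_nonneg (dlt n)]

end Aux

/-- `Σ_{I ∈ 𝓘} Σ_{A ⊆ I} Σ_{k ∈ ZMod n} (v^I_{k+1} - v^I_k)² ≤ C·log n`. -/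
theorem sum_vI_gradient_sq_le :
    ∃ C : ℝ, 0 < C ∧
      ∀ (n : ℕ) [NeZero n], 3 ≤ n →
        (∑ a : ZMod n, ∑ _A ∈ (arc n a).powerset, ∑ k : ZMod n,
            (vI n a (k + 1) - vI n a k) ^ 2) ≤ C * Real.log n := by
  refine ⟨6, by norm_num, ?_⟩
  intro n _ h3
  have hn0 : (0:ℝ) < n := by exact_mod_cast (by omega : 0 < n)
  have hlog1 : 1 ≤ Real.log n := by
    rw [Real.le_log_iff_exp_le hn0]
    calc Real.exp 1 ≤ 2.7182818286 := Real.exp_one_lt_d9.le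
      _ ≤ 3 := by norm_num
      _ ≤ n := by exact_mod_cast h3
  have hX : (0:ℝ) ≤ 4 + 2 * Real.log n := by linarith
  have hinner : ∀ a : ZMod n,
      (∑ _A ∈ (arc n a).powerset, ∑ k : ZMod n, (vI n a (k + 1) - vI n a k) ^ 2)
      = (2 ^ (n / 3) : ℝ) * ∑ k : ZMod n, (vI n a (k + 1) - vI n a k) ^ 2 := by
    intro a
    rw [Finset.sum_const, Finset.card_powerset, card_arc, nsmul_eq_mul]
    push_cast
    ring
  have hstep : ∀ a : ZMod n,
      (∑ _A ∈ (arc n a).powerset, ∑ k : ZMod n, (vI n a (k + 1) - vI n a k) ^ 2)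
      ≤ (2 ^ (n / 3) : ℝ) * (dlt n ^ 2 * (4 + 2 * Real.log n)) := by
    intro a
    rw [hinner a]
    exact mul_le_mul_of_nonneg_left (per_arc n h3 a) (by positivity)
  have hcard : (Finset.univ : Finset (ZMod n)).card = n := by
    rw [Finset.card_univ, ZMod.card]
  have htot : (∑ a : ZMod n, ∑ _A ∈ (arc n a).powerset, ∑ k : ZMod n,
        (vI n a (k + 1) - vI n a k) ^ 2)
      ≤ (n : ℝ) * ((2 ^ (n / 3) : ℝ) * (dlt n ^ 2 * (4 + 2 * Real.log n))) := by
    calc _ ≤ ∑ _a : ZMod n, (2 ^ (n / 3) : ℝ) * (dlt n ^ 2 * (4 + 2 * Real.log n)) :=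
          Finset.sum_le_sum (fun a _ => hstep a)
      _ = (n : ℝ) * ((2 ^ (n / 3) : ℝ) * (dlt n ^ 2 * (4 + 2 * Real.log n))) := by
          rw [Finset.sum_const, hcard, nsmul_eq_mul]
  -- key size bound
  have hd2 : dlt n ^ 2 = 1 / ((n : ℝ) * 2 ^ ((n : ℝ) / 3)) := by
    rw [dlt, div_pow, one_pow, mul_pow, Real.sq_sqrt hn0.le]
    congr 2
    rw [← Real.rpow_natCast ((2:ℝ) ^ ((n:ℝ)/6)) 2, ← Real.rpow_mul (by norm_num : (0:ℝ) ≤ 2)]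
    congr 1
    push_cast
    ring
  have hexp : ((n / 3 : ℕ) : ℝ) ≤ (n : ℝ) / 3 := by
    rw [le_div_iff₀ (by norm_num : (0:ℝ) < 3)]
    exact_mod_cast Nat.div_mul_le_self n 3
  have hkey : (n : ℝ) * (2 ^ (n / 3) : ℝ) * dlt n ^ 2 ≤ 1 := by
    rw [hd2, mul_one_div, div_le_one (by positivity)]
    calc (n:ℝ) * (2 ^ (n/3) : ℝ) = (n:ℝ) * (2:ℝ) ^ (((n/3 : ℕ)):ℝ) := by
          rw [Real.rpow_natCast]
      _ ≤ (n:ℝ) * 2 ^ ((n:ℝ)/3) :=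
          mul_le_mul_of_nonneg_left
            (Real.rpow_le_rpow_of_exponent_le one_le_two hexp) hn0.le
  calc (∑ a : ZMod n, ∑ _A ∈ (arc n a).powerset, ∑ k : ZMod n,
        (vI n a (k + 1) - vI n a k) ^ 2)
      ≤ (n : ℝ) * ((2 ^ (n / 3) : ℝ) * (dlt n ^ 2 * (4 + 2 * Real.log n))) := htot
    _ = ((n : ℝ) * (2 ^ (n / 3) : ℝ) * dlt n ^ 2) * (4 + 2 * Real.log n) := by ring
    _ ≤ 1 * (4 + 2 * Real.log n) := mul_le_mul_of_nonneg_right hkey hX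
    _ ≤ 6 * Real.log n := by linarith
end

section
/- Let G be a finite group and ρ a left-invariant metric on G (i.e. ρ(z·x, z·y) = ρ(x, y) for all x, y, z ∈ G). Suppose H₀ is a complex inner product space, f : G → H₀, and A, B > 0 satisfy (1/B)·‖f(x) − f(y)‖ ≤ ρ(x, y) ≤ A·‖f(x) − f(y)‖ for all x, y ∈ G. Then there exist a finite-dimensional complex inner product space H, a group homomorphism β from G into the group of unitary (linear isometric) automorphisms of H, and a vector v ∈ H such that the map g(x) := β(x)v satisfies (1/B)·‖g(x) − g(y)‖ ≤ ρ(x, y) ≤ A·‖g(x) − g(y)‖ for all x, y ∈ G. -/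
set_option maxHeartbeats 2000000 in
/-- If a finite group `G` with a left-invariant metric `ρ` admits a
bi-Lipschitz map into a complex inner product space with constants `A, B`, then there is
an *equivariant* embedding `x ↦ β(x)v` (for a unitary representation `β` on a
finite-dimensional complex inner product space and a vector `v`) with the same constants. -/
theorem equivariant_embeddings_suffice {G : Type*} [Group G] [Fintype G]
    {H₀ : Type*} [NormedAddCommGroup H₀] [InnerProductSpace ℂ H₀]
    (ρ : G → G → ℝ)
    (hsymm : ∀ x y, ρ x y = ρ y x)
    (htri : ∀ x y z, ρ x z ≤ ρ x y + ρ y z)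
    (heq : ∀ x y, ρ x y = 0 ↔ x = y)
    (hinv : ∀ x y z : G, ρ (z * x) (z * y) = ρ x y)
    (f : G → H₀) (A B : ℝ) (hA : 0 < A) (hB : 0 < B)
    (hf : ∀ x y : G, (1 / B) * ‖f x - f y‖ ≤ ρ x y ∧ ρ x y ≤ A * ‖f x - f y‖) :
    ∃ (d : ℕ) (β : G →* (EuclideanSpace ℂ (Fin d) ≃ₗᵢ[ℂ] EuclideanSpace ℂ (Fin d)))
      (v : EuclideanSpace ℂ (Fin d)),
      ∀ x y : G,
        (1 / B) * ‖β x v - β y v‖ ≤ ρ x y ∧ ρ x y ≤ A * ‖β x v - β y v‖ := by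
  classical
  have hρ0 : ∀ x y : G, 0 ≤ ρ x y := fun x y =>
    le_trans (by positivity) (hf x y).1
  set W : Submodule ℂ H₀ := Submodule.span ℂ (Set.range f) with hW
  haveI : FiniteDimensional ℂ W := FiniteDimensional.span_of_finite ℂ (Set.finite_range f)
  have hn : (0:ℝ) < (Fintype.card G : ℝ) := by
    exact_mod_cast Fintype.card_pos
  set c : ℝ := (Real.sqrt (Fintype.card G))⁻¹ with hc
  have hc0 : 0 < c := by positivity
  have hc2 : c ^ 2 = ((Fintype.card G : ℝ))⁻¹ := by
    rw [hc, inv_pow, Real.sq_sqrt hn.le]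
  let f₁ : G → W := fun x => ⟨f x, Submodule.subset_span (Set.mem_range_self x)⟩
  let H' := PiLp 2 (fun _ : G => W)
  let F : G → H' := fun x => WithLp.toLp 2 (fun z => c • f₁ (z * x))
  -- the permutation representation
  let β₀ : G →* (H' ≃ₗᵢ[ℂ] H') :=
  { toFun := fun x => LinearIsometryEquiv.piLpCongrLeft 2 ℂ W (Equiv.mulRight x⁻¹)
    map_one' := by
      apply LinearIsometryEquiv.ext; intro u; refine PiLp.ext fun z => ?_
      show u ((Equiv.mulRight ((1:G)⁻¹)).symm z) = u z
      exact congrArg u (by simp; rfl)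
    map_mul' := by
      intro x y
      apply LinearIsometryEquiv.ext; intro u; refine PiLp.ext fun z => ?_
      show u ((Equiv.mulRight ((x*y)⁻¹)).symm z) =
        u ((Equiv.mulRight (y⁻¹)).symm ((Equiv.mulRight (x⁻¹)).symm z))
      exact congrArg u (by show z * ((x*y)⁻¹)⁻¹ = z * (x⁻¹)⁻¹ * (y⁻¹)⁻¹; simp [mul_assoc]) }
  have hequiv : ∀ x : G, β₀ x (F 1) = F x := by
    intro x
    refine PiLp.ext fun z => ?_
    show F 1 ((Equiv.mulRight (x⁻¹)).symm z) = F x z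
    show c • f₁ ((Equiv.mulRight (x⁻¹)).symm z * 1) = c • f₁ (z * x)
    exact congrArg (fun w => c • f₁ w) (by simp)
  have hFnorm : ∀ x y : G, ρ x y / A ≤ ‖F x - F y‖ ∧ ‖F x - F y‖ ≤ B * ρ x y := by
    intro x y
    have hterm : ∀ z : G, ρ x y / A ≤ ‖f (z * x) - f (z * y)‖ ∧
        ‖f (z * x) - f (z * y)‖ ≤ B * ρ x y := by
      intro z
      obtain ⟨h1, h2⟩ := hf (z * x) (z * y)
      rw [hinv x y z] at h1 h2
      constructor
      · rw [div_le_iff₀ hA]; linarith [mul_comm A ‖f (z * x) - f (z * y)‖]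
      · have := mul_le_mul_of_nonneg_left h1 hB.le
        rw [← mul_assoc, mul_one_div, div_self hB.ne', one_mul] at this
        exact this
    have hFz : ∀ z : G, ‖(F x - F y) z‖ = c * ‖f (z * x) - f (z * y)‖ := by
      intro z
      have h : (F x - F y) z = c • (f₁ (z * x) - f₁ (z * y)) := by
        show F x z - F y z = _
        rw [smul_sub]
      have hcoe : ‖f₁ (z * x) - f₁ (z * y)‖ = ‖f (z * x) - f (z * y)‖ := by
        rw [Submodule.coe_norm]
        simp [f₁]
      rw [h, norm_smul, Real.norm_eq_abs, abs_of_pos hc0, hcoe]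
    have hsum : ‖F x - F y‖ ^ 2 = ∑ z : G, c ^ 2 * ‖f (z * x) - f (z * y)‖ ^ 2 := by
      rw [PiLp.norm_sq_eq_of_L2]
      exact Finset.sum_congr rfl fun z _ => by rw [hFz z, mul_pow]
    have hub : ‖F x - F y‖ ^ 2 ≤ (B * ρ x y) ^ 2 := by
      rw [hsum]
      calc ∑ z : G, c ^ 2 * ‖f (z * x) - f (z * y)‖ ^ 2
          ≤ ∑ _z : G, c ^ 2 * (B * ρ x y) ^ 2 := by
            apply Finset.sum_le_sum
            intro z _
            have h2 := (hterm z).2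
            have h0 : (0:ℝ) ≤ ‖f (z * x) - f (z * y)‖ := norm_nonneg _
            have : ‖f (z * x) - f (z * y)‖ ^ 2 ≤ (B * ρ x y) ^ 2 := by nlinarith
            nlinarith [sq_nonneg c, this]
        _ = (B * ρ x y) ^ 2 := by
            rw [Finset.sum_const, Finset.card_univ, nsmul_eq_mul, hc2]
            field_simp
    have hlb : (ρ x y / A) ^ 2 ≤ ‖F x - F y‖ ^ 2 := by
      rw [hsum]
      calc ((ρ x y / A)) ^ 2
          = ∑ _z : G, c ^ 2 * (ρ x y / A) ^ 2 := by
            rw [Finset.sum_const, Finset.card_univ, nsmul_eq_mul, hc2]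
            field_simp
        _ ≤ ∑ z : G, c ^ 2 * ‖f (z * x) - f (z * y)‖ ^ 2 := by
            apply Finset.sum_le_sum
            intro z _
            have h1 := (hterm z).1
            have h0 : (0:ℝ) ≤ ρ x y / A := div_nonneg (hρ0 x y) hA.le
            have : (ρ x y / A) ^ 2 ≤ ‖f (z * x) - f (z * y)‖ ^ 2 := by nlinarith
            nlinarith [sq_nonneg c, this]
    constructor
    · have h := Real.sqrt_le_sqrt hlb
      rwa [Real.sqrt_sq (div_nonneg (hρ0 x y) hA.le), Real.sqrt_sq (norm_nonneg _)] at h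
    · have h := Real.sqrt_le_sqrt hub
      rwa [Real.sqrt_sq (norm_nonneg _),
        Real.sqrt_sq (mul_nonneg hB.le (hρ0 x y))] at h
  -- transfer to Euclidean space
  let e₀ := (stdOrthonormalBasis ℂ H').repr
  let βE : G →* (EuclideanSpace ℂ (Fin (Module.finrank ℂ H')) ≃ₗᵢ[ℂ]
      EuclideanSpace ℂ (Fin (Module.finrank ℂ H'))) :=
  { toFun := fun x => (e₀.symm.trans (β₀ x)).trans e₀
    map_one' := by
      apply LinearIsometryEquiv.ext; intro u
      simp
    map_mul' := by
      intro x y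
      apply LinearIsometryEquiv.ext; intro u
      simp [map_mul, LinearIsometryEquiv.coe_mul] }
  refine ⟨Module.finrank ℂ H', βE, e₀ (F 1), ?_⟩
  intro x y
  have hgx : ∀ x : G, βE x (e₀ (F 1)) = e₀ (F x) := by
    intro x
    show ((e₀.symm.trans (β₀ x)).trans e₀) (e₀ (F 1)) = e₀ (F x)
    simp [hequiv x]
  rw [hgx x, hgx y, ← map_sub, e₀.norm_map]
  obtain ⟨hl, hu⟩ := hFnorm x y
  constructor
  · have h1 : (1/B) * ‖F x - F y‖ ≤ (1/B) * (B * ρ x y) :=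
      mul_le_mul_of_nonneg_left hu (by positivity)
    have h2 : (1/B) * (B * ρ x y) = ρ x y := by field_simp
    linarith
  · have h1 : A * (ρ x y / A) ≤ A * ‖F x - F y‖ :=
      mul_le_mul_of_nonneg_left hl hA.le
    have h2 : A * (ρ x y / A) = ρ x y := by field_simp
    linarith
end

section
/- Let G be a finite group and β a homomorphism from G into the group of unitary automorphisms of a complex inner product space H, such that the only vector w ∈ H with β(x)w = w for all x ∈ G is w = 0. Then for every v ∈ H: Σ_{x ∈ G} ‖β(x)v − v‖² = 2·|G|·‖v‖². -/
/-- If `β` is a unitary representation of a finite group `G` on a complex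
inner product space `H` whose only global fixed vector is `0`, then for every `v ∈ H`,
`Σ_{x ∈ G} ‖β(x)v - v‖² = 2·|G|·‖v‖²`. -/
theorem sum_norm_sq_of_no_fixed_vector {G : Type*} [Group G] [Fintype G]
    {H : Type*} [NormedAddCommGroup H] [InnerProductSpace ℂ H]
    (β : G →* (H ≃ₗᵢ[ℂ] H))
    (hfix : ∀ w : H, (∀ x : G, β x w = w) → w = 0)
    (v : H) :
    ∑ x : G, ‖β x v - v‖ ^ 2 = 2 * (Fintype.card G : ℝ) * ‖v‖ ^ 2 := by
  set w : H := ∑ x : G, β x v with hw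
  have hwfix : ∀ y : G, β y w = w := by
    intro y
    rw [hw, map_sum]
    exact Fintype.sum_equiv (Equiv.mulLeft y) _ _ (fun x => by
      simp [map_mul])
  have hw0 : w = 0 := hfix w hwfix
  have hinner : ∑ x : G, RCLike.re (inner ℂ (β x v) v : ℂ) = 0 := by
    have : (inner ℂ w v : ℂ) = ∑ x : G, inner ℂ (β x v) v := by
      rw [hw]; exact sum_inner _ _ _
    rw [hw0] at this
    have h2 : (∑ x : G, (inner ℂ (β x v) v : ℂ)) = 0 := by
      rw [← this, inner_zero_left]
    calc ∑ x : G, RCLike.re (inner ℂ (β x v) v : ℂ)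
        = RCLike.re (∑ x : G, (inner ℂ (β x v) v : ℂ)) := (map_sum _ _ _).symm
      _ = 0 := by rw [h2]; simp
  have hterm : ∀ x : G, ‖β x v - v‖ ^ 2
      = 2 * ‖v‖ ^ 2 - 2 * RCLike.re (inner ℂ (β x v) v : ℂ) := by
    intro x
    rw [@norm_sub_sq ℂ, LinearIsometryEquiv.norm_map]
    ring
  calc ∑ x : G, ‖β x v - v‖ ^ 2
      = ∑ x : G, (2 * ‖v‖ ^ 2 - 2 * RCLike.re (inner ℂ (β x v) v : ℂ)) := by
        exact Finset.sum_congr rfl fun x _ => hterm x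
    _ = (Fintype.card G : ℝ) * (2 * ‖v‖ ^ 2) - 2 * ∑ x : G, RCLike.re (inner ℂ (β x v) v : ℂ) := by
        rw [Finset.sum_sub_distrib, Finset.sum_const, ← Finset.mul_sum]
        simp [nsmul_eq_mul, Finset.card_univ]
    _ = 2 * (Fintype.card G : ℝ) * ‖v‖ ^ 2 := by rw [hinner]; ring
end

section
/- Let G be a finite Abelian (additive) group, ρ an invariant metric on G (ρ(z + x, z + y) = ρ(x, y) for all x, y, z), and D ≥ 1. Suppose there exist a complex inner product space H and a map f : G → H with √(ρ(x, y)) ≤ ‖f(x) − f(y)‖ ≤ D·√(ρ(x, y)) for all x, y ∈ G. Then there exist nonnegative reals (a_χ), indexed by the characters χ of G, such that for all x, y ∈ G: Σ_χ a_χ·|χ(x) − χ(y)|² ≤ ρ(x, y) ≤ D²·Σ_χ a_χ·|χ(x) − χ(y)|². -/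
open Finset

section Aux
variable {G : Type*} [AddCommGroup G] [Fintype G]
variable {H : Type*} [NormedAddCommGroup H] [InnerProductSpace ℂ H]

/-- Parseval-type identity: summing `⟪∑ z, χ z • g z, ∑ z, χ z • g z⟫` over all characters. -/
lemma aux_char_parseval (g : G → H) :
    ∑ χ : AddChar G ℂ, (inner ℂ (∑ z : G, χ z • g z) (∑ z : G, χ z • g z) : ℂ)
      = ((Fintype.card G : ℝ) : ℂ) * ∑ z : G, (inner ℂ (g z) (g z) : ℂ) := by
  classical
  have orth : ∀ z u : G, ∑ χ : AddChar G ℂ, (starRingEnd ℂ) (χ z) * χ u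
      = if z = u then ((Fintype.card G : ℝ) : ℂ) else 0 := by
    intro z u
    have h : ∀ χ : AddChar G ℂ, (starRingEnd ℂ) (χ z) * χ u = χ (u - z) := by
      intro χ
      rw [← AddChar.map_neg_eq_conj, ← AddChar.map_add_eq_mul, neg_add_eq_sub]
    simp_rw [h]
    rw [AddChar.sum_apply_eq_ite]
    simp [sub_eq_zero, eq_comm]
  calc ∑ χ : AddChar G ℂ, (inner ℂ (∑ z : G, χ z • g z) (∑ z : G, χ z • g z) : ℂ)
      = ∑ χ : AddChar G ℂ, ∑ z : G, ∑ u : G,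
          (starRingEnd ℂ) (χ z) * χ u * inner ℂ (g z) (g u) := by
        refine Finset.sum_congr rfl fun χ _ => ?_
        rw [sum_inner]
        refine Finset.sum_congr rfl fun z _ => ?_
        rw [inner_sum]
        refine Finset.sum_congr rfl fun u _ => ?_
        rw [inner_smul_left, inner_smul_right]; ring
    _ = ∑ z : G, ∑ u : G, (∑ χ : AddChar G ℂ, (starRingEnd ℂ) (χ z) * χ u)
          * inner ℂ (g z) (g u) := by
        rw [Finset.sum_comm]
        refine Finset.sum_congr rfl fun z _ => ?_
        rw [Finset.sum_comm]
        refine Finset.sum_congr rfl fun u _ => ?_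
        rw [Finset.sum_mul]
    _ = ∑ z : G, ((Fintype.card G : ℝ) : ℂ) * inner ℂ (g z) (g z) := by
        refine Finset.sum_congr rfl fun z _ => ?_
        simp_rw [orth]
        simp
    _ = ((Fintype.card G : ℝ) : ℂ) * ∑ z : G, (inner ℂ (g z) (g z) : ℂ) := by
        rw [Finset.mul_sum]

end Aux

/-- If a finite Abelian group `G` with invariant metric `ρ` satisfies
`√ρ(x,y) ≤ ‖f x - f y‖ ≤ D·√ρ(x,y)` for some map `f` into a complex inner product space,
then there are nonnegative weights `a_χ` on the characters of `G` with
`Σ_χ a_χ·|χ(x) - χ(y)|² ≤ ρ(x,y) ≤ D²·Σ_χ a_χ·|χ(x) - χ(y)|²` for all `x, y`. -/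
theorem equivariant_character_decomposition {G : Type*} [AddCommGroup G] [Fintype G]
    (ρ : G → G → ℝ)
    (hsymm : ∀ x y, ρ x y = ρ y x)
    (htri : ∀ x y z, ρ x z ≤ ρ x y + ρ y z)
    (heq : ∀ x y, ρ x y = 0 ↔ x = y)
    (hinv : ∀ x y z : G, ρ (z + x) (z + y) = ρ x y)
    (D : ℝ) (hD : 1 ≤ D)
    {H : Type*} [NormedAddCommGroup H] [InnerProductSpace ℂ H]
    (f : G → H)
    (hf : ∀ x y : G, Real.sqrt (ρ x y) ≤ ‖f x - f y‖ ∧ ‖f x - f y‖ ≤ D * Real.sqrt (ρ x y)) :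
    ∃ a : AddChar G ℂ → ℝ, (∀ χ, 0 ≤ a χ) ∧
      ∀ x y : G,
        (∑ χ : AddChar G ℂ, a χ * ‖χ x - χ y‖ ^ 2) ≤ ρ x y ∧
          ρ x y ≤ D ^ 2 * ∑ χ : AddChar G ℂ, a χ * ‖χ x - χ y‖ ^ 2 := by
  classical
  have hD0 : (0:ℝ) < D := lt_of_lt_of_le zero_lt_one hD
  set n : ℝ := (Fintype.card G : ℝ) with hn
  have hn0 : 0 < n := by
    rw [hn]; exact_mod_cast Fintype.card_pos
  set v : AddChar G ℂ → H := fun χ => ∑ z : G, χ z • f z with hv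
  have hρnn : ∀ x y : G, 0 ≤ ρ x y := by
    intro x y
    have h1 := htri x y x
    rw [(heq x x).mpr rfl, hsymm y x] at h1
    linarith
  have hre : ∀ u : H, (inner ℂ u u : ℂ).re = ‖u‖ ^ 2 := fun u => by
    have := inner_self_eq_norm_sq (𝕜 := ℂ) u
    simpa [RCLike.re_to_complex] using this
  -- the key identity
  have key : ∀ w : G, ∑ χ : AddChar G ℂ, ‖v χ‖ ^ 2 * ‖χ w - 1‖ ^ 2
      = n * ∑ z : G, ‖f (z - w) - f z‖ ^ 2 := by
    intro w
    have h1 : ∀ χ : AddChar G ℂ, ‖v χ‖ ^ 2 * ‖χ w - 1‖ ^ 2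
        = ‖∑ z : G, χ z • (f (z - w) - f z)‖ ^ 2 := by
      intro χ
      have h2 : (χ w - 1) • v χ = ∑ z : G, χ z • (f (z - w) - f z) := by
        rw [sub_smul, one_smul, hv]
        simp only [Finset.smul_sum, smul_smul, ← AddChar.map_add_eq_mul, smul_sub]
        rw [Finset.sum_sub_distrib]
        congr 1
        refine Fintype.sum_equiv (Equiv.addLeft w) _ _ fun z => ?_
        simp
      have h3 : ‖(χ w - 1) • v χ‖ = ‖χ w - 1‖ * ‖v χ‖ := by
        rw [norm_smul]
      rw [← h2, h3]; ring
    have h4 := congrArg Complex.re (aux_char_parseval (fun z : G => f (z - w) - f z))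
    rw [Complex.re_sum, Complex.re_ofReal_mul, Complex.re_sum] at h4
    simp_rw [hre] at h4
    simp_rw [h1]
    exact h4
  refine ⟨fun χ => ‖v χ‖ ^ 2 / (n ^ 2 * D ^ 2), fun χ => by positivity, fun x y => ?_⟩
  -- reduce |χ x - χ y| to |χ (x-y) - 1|
  have habs : ∀ χ : AddChar G ℂ, ‖χ x - χ y‖ = ‖χ (x - y) - 1‖ := by
    intro χ
    have h : χ x - χ y = χ y * (χ (x - y) - 1) := by
      rw [mul_sub, mul_one, ← AddChar.map_add_eq_mul, add_sub_cancel]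
    rw [h, norm_mul]
    have habs1 : ‖χ y‖ = 1 := by
      exact χ.norm_apply y
    rw [habs1, one_mul]
  -- bound each term of the z-sum
  have hterm : ∀ z : G, ρ x y ≤ ‖f (z - (x - y)) - f z‖ ^ 2
      ∧ ‖f (z - (x - y)) - f z‖ ^ 2 ≤ D ^ 2 * ρ x y := by
    intro z
    have he : ρ (z - (x - y)) z = ρ x y := by
      have h := hinv y x (z - x)
      have e1 : z - x + y = z - (x - y) := by abel
      have e2 : z - x + x = z := by abel
      rw [e1, e2] at h
      rw [h, hsymm]
    obtain ⟨hl, hr⟩ := hf (z - (x - y)) z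
    rw [he] at hl hr
    constructor
    · have h := pow_le_pow_left₀ (Real.sqrt_nonneg _) hl 2
      rwa [Real.sq_sqrt (hρnn x y)] at h
    · have h := pow_le_pow_left₀ (norm_nonneg _) hr 2
      rwa [mul_pow, Real.sq_sqrt (hρnn x y)] at h
  have hT1 : n * ρ x y ≤ ∑ z : G, ‖f (z - (x - y)) - f z‖ ^ 2 := by
    calc n * ρ x y = ∑ _z : G, ρ x y := by
          rw [Finset.sum_const, hn]; simp [mul_comm]
    _ ≤ _ := Finset.sum_le_sum fun z _ => (hterm z).1
  have hT2 : ∑ z : G, ‖f (z - (x - y)) - f z‖ ^ 2 ≤ n * (D ^ 2 * ρ x y) := by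
    calc ∑ z : G, ‖f (z - (x - y)) - f z‖ ^ 2
        ≤ ∑ _z : G, D ^ 2 * ρ x y := Finset.sum_le_sum fun z _ => (hterm z).2
    _ = n * (D ^ 2 * ρ x y) := by rw [Finset.sum_const, hn]; simp [mul_comm]
  have hS : ∑ χ : AddChar G ℂ, ‖v χ‖ ^ 2 / (n ^ 2 * D ^ 2) * ‖χ x - χ y‖ ^ 2
      = (∑ z : G, ‖f (z - (x - y)) - f z‖ ^ 2) / (n * D ^ 2) := by
    simp_rw [habs]
    calc ∑ χ : AddChar G ℂ, ‖v χ‖ ^ 2 / (n ^ 2 * D ^ 2) * ‖χ (x - y) - 1‖ ^ 2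
        = (∑ χ : AddChar G ℂ, ‖v χ‖ ^ 2 * ‖χ (x - y) - 1‖ ^ 2)
            / (n ^ 2 * D ^ 2) := by
          rw [Finset.sum_div]
          exact Finset.sum_congr rfl fun χ _ => by ring
      _ = (n * ∑ z : G, ‖f (z - (x - y)) - f z‖ ^ 2) / (n ^ 2 * D ^ 2) := by
          rw [key (x - y)]
      _ = (∑ z : G, ‖f (z - (x - y)) - f z‖ ^ 2) / (n * D ^ 2) := by
          field_simp
  rw [hS]
  constructor
  · rw [div_le_iff₀ (by positivity)]
    nlinarith
  · have hrw : D ^ 2 * ((∑ z : G, ‖f (z - (x - y)) - f z‖ ^ 2) / (n * D ^ 2))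
        = (∑ z : G, ‖f (z - (x - y)) - f z‖ ^ 2) / n := by
      field_simp
    rw [hrw, le_div_iff₀ hn0]
    nlinarith
end

section
/- There is a universal constant C > 0 with the following property. Let G be a finite Abelian (additive) group, ρ an invariant metric on G, and m ≥ 2 an integer such that m·x = 0 for every x ∈ G. Suppose D ≥ 1 and there exist a complex inner product space H and f : G → H with √(ρ(x, y)) ≤ ‖f(x) − f(y)‖ ≤ D·√(ρ(x, y)) for all x, y. Then there exist nonnegative reals (a_χ), indexed by the characters χ of G, such that for all x, y ∈ G: ρ(x, y) ≤ 2·D²·Σ_χ a_χ·|χ(x) − χ(y)| ≤ C·D⁴·(log m)·ρ(x, y). In particular (G, ρ) embeds into a weighted ℓ₁ space over the characters with distortion at most C·D⁴·log m. -/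
open Finset
open scoped InnerProductSpace

section Aux

lemma abs_exp_sub_one_sq (φ : ℝ) :
    ‖Complex.exp (φ * Complex.I) - 1‖ ^ 2 = 2 - 2 * Real.cos φ := by
  rw [Complex.sq_norm, Complex.normSq_apply]
  simp only [Complex.sub_re, Complex.sub_im, Complex.one_re, Complex.one_im,
    Complex.exp_ofReal_mul_I_re, Complex.exp_ofReal_mul_I_im]
  nlinarith [Real.sin_sq_add_cos_sq φ]

set_option maxHeartbeats 2000000 in
lemma scalar_key {m J : ℕ} (hm : 2 ≤ m) (hJ : m ≤ 2 ^ J) {z : ℂ} (hz : z ^ m = 1) :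
    ‖z - 1‖ ≤ Real.pi / 2 *
      ∑ j ∈ Finset.range (J + 1), (1 / 2 : ℝ) ^ j * ‖z ^ 2 ^ j - 1‖ ^ 2 := by
  classical
  have hπ : (0:ℝ) < Real.pi := Real.pi_pos
  have hsum_nonneg : (0:ℝ) ≤ ∑ j ∈ Finset.range (J + 1),
      (1 / 2 : ℝ) ^ j * ‖z ^ 2 ^ j - 1‖ ^ 2 :=
    Finset.sum_nonneg fun j _ => by positivity
  by_cases hz1 : z = 1
  · simp only [hz1, sub_self, norm_zero]
    positivity
  have habs : ‖z‖ = 1 := by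
    have h1 : ‖z‖ ^ m = 1 := by rw [← norm_pow, hz, norm_one]
    exact (pow_eq_one_iff_of_nonneg (norm_nonneg z) (by omega)).mp h1
  set θ : ℝ := Complex.arg z with hθdef
  have hzexp : Complex.exp (θ * Complex.I) = z := by
    have := Complex.norm_mul_exp_arg_mul_I z
    rwa [habs, Complex.ofReal_one, one_mul] at this
  have hθ0 : θ ≠ 0 := by
    intro h
    apply hz1
    rw [← hzexp, h]
    simp
  have hθpi : |θ| ≤ Real.pi := Complex.abs_arg_le_pi z
  obtain ⟨k, hk⟩ : ∃ k : ℤ, (m:ℝ) * θ = k * (2 * Real.pi) := by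
    have h1 : Complex.exp (((m:ℝ) * θ : ℝ) * Complex.I) = 1 := by
      rw [show (((m:ℝ) * θ : ℝ) : ℂ) * Complex.I = (m : ℕ) * (θ * Complex.I) by push_cast; ring,
        Complex.exp_nat_mul, hzexp, hz]
    obtain ⟨n, hn⟩ := Complex.exp_eq_one_iff.mp h1
    have h2 : (((m:ℝ) * θ : ℝ) : ℂ) = (((n:ℝ) * (2 * Real.pi) : ℝ) : ℂ) := by
      apply mul_right_cancel₀ Complex.I_ne_zero
      rw [hn]; push_cast; ring
    exact ⟨n, by exact_mod_cast h2⟩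
  have hk0 : k ≠ 0 := by
    rintro rfl
    simp only [Int.cast_zero, zero_mul, mul_eq_zero] at hk
    rcases hk with h | h
    · exact absurd (by exact_mod_cast h : m = 0) (by omega)
    · exact hθ0 h
  have hθlb : 2 * Real.pi / m ≤ |θ| := by
    have hk1 : (1:ℝ) ≤ |(k:ℝ)| := by
      rw [← Int.cast_abs]
      exact_mod_cast Int.one_le_abs (by omega)
    have h1 : 2 * Real.pi ≤ |(m:ℝ) * θ| := by
      rw [hk, abs_mul, abs_of_pos (by positivity : (0:ℝ) < 2 * Real.pi)]
      nlinarith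
    rw [abs_mul, Nat.abs_cast] at h1
    rw [div_le_iff₀ (by positivity : (0:ℝ) < (m:ℝ))]
    linarith
  set α : ℝ := |θ| / 2 with hαdef
  have hα0 : 0 < α := by
    have := abs_pos.mpr hθ0
    positivity
  have hα2 : α ≤ Real.pi / 2 := by rw [hαdef]; linarith
  have hα3 : Real.pi / m ≤ α := by
    have : Real.pi / m = (2 * Real.pi / m) / 2 := by ring
    rw [hαdef, this]
    linarith
  have hu : ∀ kk : ℕ, ‖z ^ kk - 1‖ ^ 2 = 4 * Real.sin (kk * α) ^ 2 := by
    intro kk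
    have hzk : z ^ kk = Complex.exp (((kk : ℝ) * θ : ℝ) * Complex.I) := by
      rw [show (((kk:ℝ) * θ : ℝ) : ℂ) * Complex.I = (kk : ℕ) * (θ * Complex.I) by push_cast; ring,
        Complex.exp_nat_mul, hzexp]
    rw [hzk, abs_exp_sub_one_sq]
    have hcos : Real.cos ((kk:ℝ) * θ) = Real.cos (2 * ((kk:ℝ) * α)) := by
      rw [← Real.cos_abs ((kk:ℝ) * θ), abs_mul,
        abs_of_nonneg (show (0:ℝ) ≤ (kk:ℝ) from Nat.cast_nonneg kk), hαdef]
      congr 1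
      ring
    rw [hcos, Real.cos_two_mul']
    nlinarith [Real.sin_sq_add_cos_sq ((kk:ℝ) * α)]
  have hsinα : 0 ≤ Real.sin α :=
    Real.sin_nonneg_of_nonneg_of_le_pi hα0.le (by linarith)
  have hlhs : ‖z - 1‖ = 2 * Real.sin α := by
    have h1 := hu 1
    rw [pow_one] at h1
    push_cast at h1
    rw [one_mul] at h1
    have h3 : ‖z - 1‖ ^ 2 = (2 * Real.sin α) ^ 2 := by rw [h1]; ring
    exact (pow_left_inj₀ (norm_nonneg _) (by positivity) (by norm_num)).mp h3
  -- find the right scale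
  set j0 : ℕ := Nat.findGreatest (fun j => (2:ℝ) ^ j * α ≤ Real.pi / 2) J with hj0def
  have hP0 : (2:ℝ) ^ (0:ℕ) * α ≤ Real.pi / 2 := by simpa using hα2
  have hPj : (2:ℝ) ^ j0 * α ≤ Real.pi / 2 := by
    have := Nat.findGreatest_spec (P := fun j => (2:ℝ) ^ j * α ≤ Real.pi / 2)
      (Nat.zero_le J) hP0
    simpa [← hj0def] using this
  have hPJ : ¬ ((2:ℝ) ^ J * α ≤ Real.pi / 2) := by
    push_neg
    have h2J : (m:ℝ) ≤ (2:ℝ) ^ J := by exact_mod_cast hJ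
    have hmpos : (0:ℝ) < m := by positivity
    have : Real.pi ≤ (2:ℝ) ^ J * α := by
      calc Real.pi = (m:ℝ) * (Real.pi / m) := by field_simp
        _ ≤ (2:ℝ) ^ J * α := mul_le_mul h2J hα3 (by positivity) (by positivity)
    linarith
  have hj0J : j0 < J := by
    rcases lt_or_eq_of_le (Nat.findGreatest_le (P := fun j => (2:ℝ) ^ j * α ≤ Real.pi / 2) J)
      with h | h
    · exact h
    · rw [← hj0def] at h
      exact absurd (h ▸ hPj) hPJ
  have hP1 : ¬ ((2:ℝ) ^ (j0 + 1) * α ≤ Real.pi / 2) := by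
    have := Nat.findGreatest_is_greatest (P := fun j => (2:ℝ) ^ j * α ≤ Real.pi / 2)
      (n := J) (k := j0 + 1) (by omega) (by omega)
    simpa using this
  clear hPJ
  clear_value j0
  have hgt : Real.pi / 4 < (2:ℝ) ^ j0 * α := by
    push_neg at hP1
    have h2 : (2:ℝ) ^ (j0 + 1) = 2 * (2:ℝ) ^ j0 := by ring
    nlinarith
  have hsinj0 : Real.sqrt 2 / 2 ≤ Real.sin ((2:ℝ) ^ j0 * α) := by
    rw [← Real.sin_pi_div_four]
    exact (Real.strictMonoOn_sin (Set.mem_Icc.mpr ⟨by linarith, by linarith⟩)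
      (Set.mem_Icc.mpr ⟨by nlinarith, hPj⟩) hgt).le
  have hp : (0:ℝ) < (2:ℝ) ^ j0 := by positivity
  have hip : (0:ℝ) < ((2:ℝ) ^ j0)⁻¹ := by positivity
  have hterm : 2 * ((2:ℝ) ^ j0)⁻¹ ≤ (1/2:ℝ) ^ j0 * ‖z ^ 2 ^ j0 - 1‖ ^ 2 := by
    rw [hu (2 ^ j0)]
    have hc : ((2 ^ j0 : ℕ) : ℝ) = (2:ℝ) ^ j0 := by push_cast; ring
    rw [hc, one_div, inv_pow]
    have hs2 : (1/2:ℝ) ≤ Real.sin ((2:ℝ) ^ j0 * α) ^ 2 := by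
      nlinarith [hsinj0, Real.sq_sqrt (show (0:ℝ) ≤ 2 by norm_num), Real.sqrt_nonneg 2]
    calc 2 * ((2:ℝ) ^ j0)⁻¹ = ((2:ℝ) ^ j0)⁻¹ * (4 * (1/2)) := by ring
      _ ≤ ((2:ℝ) ^ j0)⁻¹ * (4 * Real.sin ((2:ℝ) ^ j0 * α) ^ 2) := by
          apply mul_le_mul_of_nonneg_left (by linarith) hip.le
  have hscale : 2 * α / Real.pi ≤ ((2:ℝ) ^ j0)⁻¹ := by
    rw [div_le_iff₀ hπ]
    have h2 : α ≤ ((2:ℝ) ^ j0)⁻¹ * (Real.pi / 2) := by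
      calc α = ((2:ℝ) ^ j0)⁻¹ * ((2:ℝ) ^ j0 * α) := by
            rw [← mul_assoc, inv_mul_cancel₀ (ne_of_gt hp), one_mul]
        _ ≤ _ := mul_le_mul_of_nonneg_left hPj hip.le
    linarith
  have hsum_ge : (1/2:ℝ) ^ j0 * ‖z ^ 2 ^ j0 - 1‖ ^ 2 ≤
      ∑ j ∈ Finset.range (J + 1), (1 / 2 : ℝ) ^ j * ‖z ^ 2 ^ j - 1‖ ^ 2 :=
    Finset.single_le_sum (f := fun j => (1/2:ℝ) ^ j * ‖z ^ 2 ^ j - 1‖ ^ 2)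
      (fun i _ => by positivity) (Finset.mem_range.mpr (by omega : j0 < J + 1))
  have h1 : 2 * α ≤ Real.pi / 2 * (2 * ((2:ℝ) ^ j0)⁻¹) := by
    have e : 2 * α / Real.pi * Real.pi = 2 * α := div_mul_cancel₀ _ (ne_of_gt hπ)
    calc 2 * α = 2 * α / Real.pi * Real.pi := e.symm
      _ ≤ ((2:ℝ) ^ j0)⁻¹ * Real.pi := mul_le_mul_of_nonneg_right hscale hπ.le
      _ = Real.pi / 2 * (2 * ((2:ℝ) ^ j0)⁻¹) := by ring
  have h2 : Real.pi / 2 * (2 * ((2:ℝ) ^ j0)⁻¹) ≤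
      Real.pi / 2 * ((1/2:ℝ) ^ j0 * ‖z ^ 2 ^ j0 - 1‖ ^ 2) :=
    mul_le_mul_of_nonneg_left hterm (by positivity)
  have h3 : Real.pi / 2 * ((1/2:ℝ) ^ j0 * ‖z ^ 2 ^ j0 - 1‖ ^ 2) ≤
      Real.pi / 2 * ∑ j ∈ Finset.range (J + 1), (1 / 2 : ℝ) ^ j * ‖z ^ 2 ^ j - 1‖ ^ 2 :=
    mul_le_mul_of_nonneg_left hsum_ge (by positivity)
  have hsin_le : Real.sin α ≤ α := (Real.sin_lt hα0).le
  rw [hlhs]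
  linarith

variable {G : Type} [AddCommGroup G] [Fintype G]
variable {H : Type} [NormedAddCommGroup H] [InnerProductSpace ℂ H]

lemma conj_char_mul (χ : AddChar G ℂ) (w z s : G) :
    (starRingEnd ℂ) (χ w) * (χ z * χ s) = χ (z + s - w) := by
  have h1 : ‖χ w‖ = 1 := by
    exact AddChar.norm_apply χ w
  have h2 : (starRingEnd ℂ) (χ w) = χ (-w) := by
    rw [AddChar.map_neg_eq_inv, Complex.inv_eq_conj h1]
  rw [h2, ← AddChar.map_add_eq_mul, ← AddChar.map_add_eq_mul]
  congr 1
  abel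

set_option maxHeartbeats 1000000 in
lemma charSum (f : G → H) (s : G) :
    ∑ χ : AddChar G ℂ, (⟪∑ z : G, χ z • f z, ∑ z : G, χ z • f z⟫_ℂ) * χ s
      = (Fintype.card G : ℂ) * ∑ w : G, ⟪f (w + s), f w⟫_ℂ := by
  classical
  have expand : ∀ χ : AddChar G ℂ,
      (⟪∑ z : G, χ z • f z, ∑ z : G, χ z • f z⟫_ℂ) =
        ∑ w : G, ∑ z : G, (starRingEnd ℂ) (χ w) * (χ z * ⟪f w, f z⟫_ℂ) := by
    intro χ
    rw [sum_inner]
    refine Finset.sum_congr rfl fun w _ => ?_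
    rw [inner_sum]
    simp only [inner_smul_left, inner_smul_right]
    refine Finset.sum_congr rfl fun z _ => ?_
    ring
  have swap : ∑ χ : AddChar G ℂ, (⟪∑ z : G, χ z • f z, ∑ z : G, χ z • f z⟫_ℂ) * χ s
      = ∑ w : G, ∑ z : G,
          (∑ χ : AddChar G ℂ, (starRingEnd ℂ) (χ w) * (χ z * χ s)) * ⟪f w, f z⟫_ℂ := by
    simp_rw [expand, Finset.sum_mul]
    rw [Finset.sum_comm]
    refine Finset.sum_congr rfl fun w _ => ?_
    rw [Finset.sum_comm]
    refine Finset.sum_congr rfl fun z _ => ?_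
    exact Finset.sum_congr rfl fun χ _ => by ring
  rw [swap]
  have hchar : ∀ w z : G,
      (∑ χ : AddChar G ℂ, (starRingEnd ℂ) (χ w) * (χ z * χ s))
        = if z = w - s then (Fintype.card G : ℂ) else 0 := by
    intro w z
    rw [Finset.sum_congr rfl fun χ _ => conj_char_mul χ w z s]
    rw [AddChar.sum_apply_eq_ite]
    congr 1
    simp only [eq_iff_iff]
    constructor
    · intro h; have : z + s - w + w - s = 0 + w - s := by rw [h]
      simpa using this
    · intro h; rw [h]; abel
  have hrow : ∀ w : G,
      (∑ z : G, (if z = w - s then (Fintype.card G : ℂ) else 0) * ⟪f w, f z⟫_ℂ)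
        = (Fintype.card G : ℂ) * ⟪f w, f (w - s)⟫_ℂ := by
    intro w
    rw [Finset.sum_eq_single (w - s)]
    · simp
    · intro b _ hb; simp [hb]
    · intro h; exact absurd (Finset.mem_univ _) h
  calc ∑ w : G, ∑ z : G,
        (∑ χ : AddChar G ℂ, (starRingEnd ℂ) (χ w) * (χ z * χ s)) * ⟪f w, f z⟫_ℂ
      = ∑ w : G, (Fintype.card G : ℂ) * ⟪f w, f (w - s)⟫_ℂ := by
        refine Finset.sum_congr rfl fun w _ => ?_
        rw [Finset.sum_congr rfl fun z _ => by rw [hchar w z]]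
        exact hrow w
    _ = (Fintype.card G : ℂ) * ∑ w : G, ⟪f w, f (w - s)⟫_ℂ := by rw [Finset.mul_sum]
    _ = (Fintype.card G : ℂ) * ∑ w : G, ⟪f (w + s), f w⟫_ℂ := by
        congr 1
        refine Fintype.sum_equiv (Equiv.subRight s) _ _ fun v => ?_
        simp [Equiv.subRight_apply, sub_add_cancel]

set_option maxHeartbeats 1000000 in
lemma psi_repr (f : G → H) (t : G) :
    ∑ χ : AddChar G ℂ, ‖∑ z : G, χ z • f z‖ ^ 2 * (1 - (χ t).re)
      = (Fintype.card G : ℝ) *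
          ∑ z : G, (‖f z‖ ^ 2 - (⟪f (z + t), f z⟫_ℂ).re) := by
  classical
  have hre : ∀ s : G, ∑ χ : AddChar G ℂ, ‖∑ z : G, χ z • f z‖ ^ 2 * (χ s).re
      = (Fintype.card G : ℝ) * ∑ w : G, (⟪f (w + s), f w⟫_ℂ).re := by
    intro s
    have hA := charSum f s
    have := congrArg Complex.re hA
    rw [Complex.re_sum] at this
    rw [show ((Fintype.card G : ℂ) * ∑ w : G, ⟪f (w + s), f w⟫_ℂ).re
        = (Fintype.card G : ℝ) * (∑ w : G, ⟪f (w + s), f w⟫_ℂ).re by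
      rw [Complex.mul_re]; simp] at this
    rw [Complex.re_sum] at this
    rw [← this]
    refine Finset.sum_congr rfl fun χ _ => ?_
    rw [Complex.mul_re]
    have him : (⟪∑ z : G, χ z • f z, ∑ z : G, χ z • f z⟫_ℂ).im = 0 := by
      rw [← RCLike.im_to_complex]; exact inner_self_im _
    have hrer : (⟪∑ z : G, χ z • f z, ∑ z : G, χ z • f z⟫_ℂ).re = ‖∑ z : G, χ z • f z‖ ^ 2 := by
      rw [← RCLike.re_to_complex]; exact inner_self_eq_norm_sq _
    rw [him, hrer]
    ring
  have h0 := hre 0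
  have ht := hre t
  have h00 : ∀ χ : AddChar G ℂ, ((χ (0:G)).re : ℝ) = 1 := by
    intro χ; rw [AddChar.map_zero_eq_one]; simp
  rw [Finset.sum_congr rfl fun χ _ => by rw [h00 χ, mul_one]] at h0
  have h0' : ∑ χ : AddChar G ℂ, ‖∑ z : G, χ z • f z‖ ^ 2
      = (Fintype.card G : ℝ) * ∑ w : G, ‖f w‖ ^ 2 := by
    rw [h0]
    congr 1
    refine Finset.sum_congr rfl fun w _ => ?_
    have : (⟪f (w + 0), f w⟫_ℂ).re = ‖f w‖ ^ 2 := by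
      rw [add_zero, ← RCLike.re_to_complex]; exact inner_self_eq_norm_sq _
    rw [this]
  have expand : ∑ χ : AddChar G ℂ, ‖∑ z : G, χ z • f z‖ ^ 2 * (1 - (χ t).re)
      = (∑ χ : AddChar G ℂ, ‖∑ z : G, χ z • f z‖ ^ 2)
        - ∑ χ : AddChar G ℂ, ‖∑ z : G, χ z • f z‖ ^ 2 * (χ t).re := by
    rw [← Finset.sum_sub_distrib]
    refine Finset.sum_congr rfl fun χ _ => by ring
  rw [expand, h0', ht, ← mul_sub, ← Finset.sum_sub_distrib]

end Aux

/-- There is a universal `C > 0` such that: if `G` is a finite Abelian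
group of exponent dividing `m ≥ 2` with an invariant metric `ρ`, and `(G, √ρ)` embeds in a
complex inner product space with distortion `D ≥ 1` (normalized as below), then there are
nonnegative weights `a_χ` on the characters with
`ρ(x,y) ≤ 2·D²·Σ_χ a_χ·|χ(x) - χ(y)| ≤ C·D⁴·(log m)·ρ(x,y)`, i.e. `(G, ρ)` embeds in a
weighted ℓ₁ space over the characters with distortion `O(D⁴ log m)`. -/
theorem abelian_negative_type_embeds_in_L1 :
    ∃ C : ℝ, 0 < C ∧
      ∀ (G : Type) [AddCommGroup G] [Fintype G] (ρ : G → G → ℝ),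
        (∀ x y, ρ x y = ρ y x) →
        (∀ x y z, ρ x z ≤ ρ x y + ρ y z) →
        (∀ x y, ρ x y = 0 ↔ x = y) →
        (∀ x y z : G, ρ (z + x) (z + y) = ρ x y) →
        ∀ m : ℕ, 2 ≤ m → (∀ x : G, m • x = 0) →
        ∀ D : ℝ, 1 ≤ D →
        ∀ (H : Type) [NormedAddCommGroup H] [InnerProductSpace ℂ H] (f : G → H),
        (∀ x y : G,
          Real.sqrt (ρ x y) ≤ ‖f x - f y‖ ∧ ‖f x - f y‖ ≤ D * Real.sqrt (ρ x y)) →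
        ∃ a : AddChar G ℂ → ℝ, (∀ χ, 0 ≤ a χ) ∧
          ∀ x y : G,
            ρ x y ≤ 2 * D ^ 2 * (∑ χ : AddChar G ℂ, a χ * ‖χ x - χ y‖) ∧
              2 * D ^ 2 * (∑ χ : AddChar G ℂ, a χ * ‖χ x - χ y‖) ≤
                C * D ^ 4 * Real.log m * ρ x y := by
  classical
  have hlog2 : (0:ℝ) < Real.log 2 := Real.log_pos (by norm_num)
  have hπ : (0:ℝ) < Real.pi := Real.pi_pos
  refine ⟨6 * Real.pi / Real.log 2, by positivity, ?_⟩
  intro G _ _ ρ hsymm htri hzero hinv m hm hexp D hD H _ _ f hf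
  classical
  set N : ℝ := (Fintype.card G : ℝ) with hNdef
  have hN : (0:ℝ) < N := by
    rw [hNdef]; exact_mod_cast Fintype.card_pos
  have hρnn : ∀ x y : G, 0 ≤ ρ x y := by
    intro x y
    have h1 := htri x y x
    have h2 := hsymm y x
    have h3 := (hzero x x).mpr rfl
    linarith
  have hρsub : ∀ x y : G, ρ x y = ρ (x - y) 0 := by
    intro x y
    have h := hinv (x - y) 0 y
    have e1 : y + (x - y) = x := by abel
    rw [e1, add_zero] at h
    exact h
  have hnorm2 : ∀ x y : G, ρ x y ≤ ‖f x - f y‖ ^ 2 ∧ ‖f x - f y‖ ^ 2 ≤ D ^ 2 * ρ x y := by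
    intro x y
    obtain ⟨h1, h2⟩ := hf x y
    have h0 := hρnn x y
    have hs := Real.sq_sqrt h0
    have hsn := Real.sqrt_nonneg (ρ x y)
    have hnn := norm_nonneg (f x - f y)
    constructor
    · nlinarith
    · nlinarith
  set ψ : G → ℝ := fun t => (∑ z : G, ‖f (z + t) - f z‖ ^ 2) / N with hψdef
  have hψ_lb : ∀ t : G, ρ t 0 ≤ ψ t := by
    intro t
    have h1 : ∀ z : G, ρ t 0 ≤ ‖f (z + t) - f z‖ ^ 2 := by
      intro z
      have h := hinv t 0 z
      rw [add_zero] at h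
      have h2 := (hnorm2 (z + t) z).1
      rw [h] at h2
      exact h2
    have h2 : N * ρ t 0 ≤ ∑ z : G, ‖f (z + t) - f z‖ ^ 2 := by
      calc N * ρ t 0 = ∑ _z : G, ρ t 0 := by
            rw [Finset.sum_const, Finset.card_univ, nsmul_eq_mul, hNdef]
        _ ≤ _ := Finset.sum_le_sum fun z _ => h1 z
    simp only [hψdef]
    rw [le_div_iff₀ hN]
    linarith
  have hψ_ub : ∀ t : G, ψ t ≤ D ^ 2 * ρ t 0 := by
    intro t
    have h1 : ∀ z : G, ‖f (z + t) - f z‖ ^ 2 ≤ D ^ 2 * ρ t 0 := by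
      intro z
      have h := hinv t 0 z
      rw [add_zero] at h
      have h2 := (hnorm2 (z + t) z).2
      rw [h] at h2
      exact h2
    have h2 : ∑ z : G, ‖f (z + t) - f z‖ ^ 2 ≤ N * (D ^ 2 * ρ t 0) := by
      calc ∑ z : G, ‖f (z + t) - f z‖ ^ 2 ≤ ∑ _z : G, D ^ 2 * ρ t 0 :=
            Finset.sum_le_sum fun z _ => h1 z
        _ = N * (D ^ 2 * ρ t 0) := by
            rw [Finset.sum_const, Finset.card_univ, nsmul_eq_mul, hNdef]
    simp only [hψdef]
    rw [div_le_iff₀ hN]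
    linarith
  set a : AddChar G ℂ → ℝ := fun χ => 2 * ‖∑ z : G, χ z • f z‖ ^ 2 / N ^ 2 with hadef
  have ha : ∀ χ, 0 ≤ a χ := fun χ => by simp only [hadef]; positivity
  have hψ_repr : ∀ t : G, ψ t = ∑ χ : AddChar G ℂ, a χ * (1 - (χ t).re) := by
    intro t
    have hP := psi_repr f t
    have hexp2 : ∀ z : G, ‖f (z + t) - f z‖ ^ 2
        = ‖f (z + t)‖ ^ 2 - 2 * (⟪f (z + t), f z⟫_ℂ).re + ‖f z‖ ^ 2 := by
      intro z
      have h := norm_sub_sq (𝕜 := ℂ) (f (z + t)) (f z)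
      rw [RCLike.re_to_complex] at h
      exact h
    have hshift : ∑ z : G, ‖f (z + t)‖ ^ 2 = ∑ z : G, ‖f z‖ ^ 2 := by
      refine Fintype.sum_equiv (Equiv.addRight t) _ _ fun v => ?_
      simp [Equiv.coe_addRight]
    have hsum : ∑ z : G, ‖f (z + t) - f z‖ ^ 2
        = 2 * ∑ z : G, (‖f z‖ ^ 2 - (⟪f (z + t), f z⟫_ℂ).re) := by
      have e1 : ∑ z : G, ‖f (z + t) - f z‖ ^ 2
          = (∑ z : G, ‖f (z + t)‖ ^ 2) - 2 * ∑ z : G, (⟪f (z + t), f z⟫_ℂ).re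
              + ∑ z : G, ‖f z‖ ^ 2 := by
        rw [Finset.sum_congr rfl fun z _ => hexp2 z, Finset.sum_add_distrib,
          Finset.sum_sub_distrib, Finset.mul_sum]
      rw [e1, hshift, Finset.sum_sub_distrib]
      ring
    have hP' : ∑ z : G, (‖f z‖ ^ 2 - (⟪f (z + t), f z⟫_ℂ).re)
        = (∑ χ : AddChar G ℂ, ‖∑ z : G, χ z • f z‖ ^ 2 * (1 - (χ t).re)) / N := by
      rw [hP, ← hNdef, mul_div_cancel_left₀ _ (ne_of_gt hN)]
    simp only [hψdef]
    calc (∑ z : G, ‖f (z + t) - f z‖ ^ 2) / N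
        = 2 * ((∑ χ : AddChar G ℂ, ‖∑ z : G, χ z • f z‖ ^ 2 * (1 - (χ t).re)) / N) / N := by
          rw [hsum, hP']
      _ = ∑ χ : AddChar G ℂ, a χ * (1 - (χ t).re) := by
          have e3 : ∀ χ : AddChar G ℂ, a χ * (1 - (χ t).re)
              = 2 * (‖∑ z : G, χ z • f z‖ ^ 2 * (1 - (χ t).re)) / N ^ 2 := by
            intro χ; simp only [hadef]; ring
          rw [Finset.sum_congr rfl fun χ _ => e3 χ, ← Finset.sum_div, ← Finset.mul_sum]
          ring
  have h1re : ∀ (χ : AddChar G ℂ) (s : G), 1 - (χ s).re = ‖χ s - 1‖ ^ 2 / 2 := by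
    intro χ s
    have h1 : ‖χ s‖ = 1 := by
      exact AddChar.norm_apply χ s
    have h2 : (χ s).re * (χ s).re + (χ s).im * (χ s).im = 1 := by
      have h3 := Complex.sq_norm (χ s)
      rw [h1, Complex.normSq_apply] at h3
      linarith [h3]
    rw [Complex.sq_norm, Complex.normSq_apply]
    simp only [Complex.sub_re, Complex.sub_im, Complex.one_re, Complex.one_im]
    ring_nf
    ring_nf at h2
    linarith
  have hSnn : ∀ s : G, 0 ≤ ∑ χ : AddChar G ℂ, a χ * ‖χ s - 1‖ := fun s =>
    Finset.sum_nonneg fun χ _ => mul_nonneg (ha χ) (norm_nonneg _)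
  have hS_lb : ∀ s : G, ρ s 0 ≤ ∑ χ : AddChar G ℂ, a χ * ‖χ s - 1‖ := by
    intro s
    have e1 : ψ s = ∑ χ : AddChar G ℂ, a χ * (‖χ s - 1‖ ^ 2 / 2) := by
      rw [hψ_repr s]
      exact Finset.sum_congr rfl fun χ _ => by rw [h1re χ s]
    have e2 : ∑ χ : AddChar G ℂ, a χ * (‖χ s - 1‖ ^ 2 / 2)
        ≤ ∑ χ : AddChar G ℂ, a χ * ‖χ s - 1‖ := by
      refine Finset.sum_le_sum fun χ _ => mul_le_mul_of_nonneg_left ?_ (ha χ)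
      have hle2 : ‖χ s - 1‖ ≤ 2 := by
        have h := norm_sub_le (χ s) (1:ℂ)
        rw [AddChar.norm_apply, norm_one] at h
        linarith
      nlinarith [norm_nonneg (χ s - 1)]
    have h3 := hψ_lb s
    rw [e1] at h3
    linarith
  have hρ_nsmul : ∀ (k : ℕ) (t : G), ρ (k • t) 0 ≤ (k : ℝ) * ρ t 0 := by
    intro k
    induction k with
    | zero =>
        intro t
        rw [zero_nsmul]
        simp [(hzero (0:G) (0:G)).mpr rfl]
    | succ n ih =>
        intro t
        have h1 : ρ ((n + 1) • t) (n • t) = ρ t 0 := by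
          have h := hinv t 0 (n • t)
          rw [add_zero] at h
          rw [succ_nsmul]
          exact h
        have h2 := htri ((n + 1) • t) (n • t) 0
        have h3 := ih t
        push_cast
        linarith
  have hroot : ∀ (χ : AddChar G ℂ) (s : G), (χ s) ^ m = 1 := by
    intro χ s
    rw [← AddChar.map_nsmul_eq_pow, hexp s, AddChar.map_zero_eq_one]
  set J : ℕ := Nat.clog 2 m with hJdef
  have hJ : m ≤ 2 ^ J := Nat.le_pow_clog (by norm_num) m
  have hJpos : 0 < J := Nat.clog_pos (by norm_num) hm
  have hJlog : (J : ℝ) + 1 ≤ 3 * Real.log m / Real.log 2 := by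
    have h1 : 2 ^ (J - 1) < m := by
      rw [hJdef]
      exact Nat.pow_pred_clog_lt_self (by norm_num) (by omega)
    have h2 : ((2:ℝ)) ^ (J - 1 : ℕ) ≤ (m:ℝ) := by exact_mod_cast h1.le
    have h3 : ((J:ℝ) - 1) * Real.log 2 ≤ Real.log m := by
      have h4 := Real.log_le_log (by positivity) h2
      rw [Real.log_pow] at h4
      have h5 : ((J - 1 : ℕ) : ℝ) = (J:ℝ) - 1 := by
        rw [Nat.cast_sub hJpos]; norm_num
      rw [h5] at h4
      exact h4
    have h6 : Real.log 2 ≤ Real.log m := by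
      apply Real.log_le_log (by norm_num)
      exact_mod_cast hm
    rw [le_div_iff₀ hlog2]
    linarith
  have hS_ub : ∀ s : G, ∑ χ : AddChar G ℂ, a χ * ‖χ s - 1‖
      ≤ Real.pi * ((J:ℝ) + 1) * D ^ 2 * ρ s 0 := by
    intro s
    have step1 : ∑ χ : AddChar G ℂ, a χ * ‖χ s - 1‖
        ≤ ∑ χ : AddChar G ℂ, a χ * (Real.pi / 2 *
            ∑ j ∈ Finset.range (J + 1), (1/2:ℝ) ^ j * ‖(χ s) ^ 2 ^ j - 1‖ ^ 2) :=
      Finset.sum_le_sum fun χ _ =>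
        mul_le_mul_of_nonneg_left (scalar_key hm hJ (hroot χ s)) (ha χ)
    have step3 : ∀ u : G, ∑ χ : AddChar G ℂ, a χ * ‖χ u - 1‖ ^ 2 = 2 * ψ u := by
      intro u
      rw [hψ_repr u, Finset.mul_sum]
      refine Finset.sum_congr rfl fun χ _ => ?_
      rw [h1re χ u]
      ring
    have step2 : ∑ χ : AddChar G ℂ, a χ * (Real.pi / 2 *
            ∑ j ∈ Finset.range (J + 1), (1/2:ℝ) ^ j * ‖(χ s) ^ 2 ^ j - 1‖ ^ 2)
        = Real.pi / 2 * ∑ j ∈ Finset.range (J + 1), (1/2:ℝ) ^ j * (2 * ψ (2 ^ j • s)) := by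
      calc ∑ χ : AddChar G ℂ, a χ * (Real.pi / 2 *
              ∑ j ∈ Finset.range (J + 1), (1/2:ℝ) ^ j * ‖(χ s) ^ 2 ^ j - 1‖ ^ 2)
          = ∑ χ : AddChar G ℂ, ∑ j ∈ Finset.range (J + 1),
              Real.pi / 2 * ((1/2:ℝ) ^ j * (a χ * ‖(χ s) ^ 2 ^ j - 1‖ ^ 2)) := by
            refine Finset.sum_congr rfl fun χ _ => ?_
            rw [Finset.mul_sum, Finset.mul_sum]
            exact Finset.sum_congr rfl fun j _ => by ring
        _ = ∑ j ∈ Finset.range (J + 1), ∑ χ : AddChar G ℂ,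
              Real.pi / 2 * ((1/2:ℝ) ^ j * (a χ * ‖(χ s) ^ 2 ^ j - 1‖ ^ 2)) :=
            Finset.sum_comm
        _ = Real.pi / 2 * ∑ j ∈ Finset.range (J + 1), (1/2:ℝ) ^ j * (2 * ψ (2 ^ j • s)) := by
            rw [Finset.mul_sum]
            refine Finset.sum_congr rfl fun j _ => ?_
            have hpow : ∀ χ : AddChar G ℂ, (χ s) ^ 2 ^ j = χ (2 ^ j • s) := fun χ =>
              (AddChar.map_nsmul_eq_pow χ _ s).symm
            calc ∑ χ : AddChar G ℂ,
                  Real.pi / 2 * ((1/2:ℝ) ^ j * (a χ * ‖(χ s) ^ 2 ^ j - 1‖ ^ 2))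
                = Real.pi / 2 * ((1/2:ℝ) ^ j *
                    ∑ χ : AddChar G ℂ, a χ * ‖χ (2 ^ j • s) - 1‖ ^ 2) := by
                  rw [Finset.mul_sum, Finset.mul_sum]
                  exact Finset.sum_congr rfl fun χ _ => by rw [hpow χ]
              _ = Real.pi / 2 * ((1/2:ℝ) ^ j * (2 * ψ (2 ^ j • s))) := by
                  rw [step3 (2 ^ j • s)]
    have step4 : ∀ j : ℕ, (1/2:ℝ) ^ j * (2 * ψ (2 ^ j • s)) ≤ 2 * D ^ 2 * ρ s 0 := by
      intro j
      have h1 := hψ_ub (2 ^ j • s)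
      have h2 := hρ_nsmul (2 ^ j) s
      have hc : ((2 ^ j : ℕ) : ℝ) = (2:ℝ) ^ j := by push_cast; ring
      rw [hc] at h2
      have h3 : ((2:ℝ)) ^ j * (1/2:ℝ) ^ j = 1 := by
        rw [← mul_pow]; norm_num
      have h4 : (0:ℝ) ≤ (1/2:ℝ) ^ j := by positivity
      have hD2 : (0:ℝ) ≤ D ^ 2 := by positivity
      calc (1/2:ℝ) ^ j * (2 * ψ (2 ^ j • s))
          ≤ (1/2:ℝ) ^ j * (2 * (D ^ 2 * ((2:ℝ) ^ j * ρ s 0))) := by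
            apply mul_le_mul_of_nonneg_left _ h4
            have h5 := h1.trans (mul_le_mul_of_nonneg_left h2 hD2)
            linarith
        _ = ((2:ℝ) ^ j * (1/2:ℝ) ^ j) * (2 * D ^ 2 * ρ s 0) := by ring
        _ = 2 * D ^ 2 * ρ s 0 := by rw [h3, one_mul]
    calc ∑ χ : AddChar G ℂ, a χ * ‖χ s - 1‖
        ≤ ∑ χ : AddChar G ℂ, a χ * (Real.pi / 2 *
            ∑ j ∈ Finset.range (J + 1), (1/2:ℝ) ^ j * ‖(χ s) ^ 2 ^ j - 1‖ ^ 2) :=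
          step1
      _ = Real.pi / 2 * ∑ j ∈ Finset.range (J + 1), (1/2:ℝ) ^ j * (2 * ψ (2 ^ j • s)) := step2
      _ ≤ Real.pi / 2 * ∑ _j ∈ Finset.range (J + 1), 2 * D ^ 2 * ρ s 0 :=
          mul_le_mul_of_nonneg_left (Finset.sum_le_sum fun j _ => step4 j) (by positivity)
      _ = Real.pi * ((J:ℝ) + 1) * D ^ 2 * ρ s 0 := by
          rw [Finset.sum_const, Finset.card_range, nsmul_eq_mul]
          push_cast
          ring
  refine ⟨a, ha, ?_⟩
  intro x y
  have habs_eq : ∀ χ : AddChar G ℂ, ‖χ x - χ y‖ = ‖χ (x - y) - 1‖ := by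
    intro χ
    have e : χ (x - y) * χ y = χ x := by
      rw [← AddChar.map_add_eq_mul]
      congr 1
      abel
    have e2 : χ x - χ y = (χ (x - y) - 1) * χ y := by rw [sub_mul, one_mul, e]
    rw [e2, norm_mul]
    have h1 : ‖χ y‖ = 1 := by
      exact AddChar.norm_apply χ y
    rw [h1, mul_one]
  have hsum_eq : ∑ χ : AddChar G ℂ, a χ * ‖χ x - χ y‖
      = ∑ χ : AddChar G ℂ, a χ * ‖χ (x - y) - 1‖ :=
    Finset.sum_congr rfl fun χ _ => by rw [habs_eq χ]
  have hρxy : ρ x y = ρ (x - y) 0 := hρsub x y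
  have hlb := hS_lb (x - y)
  have hub := hS_ub (x - y)
  have hSnn' := hSnn (x - y)
  have hD2 : (1:ℝ) ≤ D ^ 2 := by nlinarith
  constructor
  · rw [hsum_eq, hρxy]
    nlinarith [hlb, hSnn']
  · rw [hsum_eq]
    have h1 : 2 * D ^ 2 * ∑ χ : AddChar G ℂ, a χ * ‖χ (x - y) - 1‖
        ≤ 2 * D ^ 2 * (Real.pi * ((J:ℝ) + 1) * D ^ 2 * ρ (x - y) 0) :=
      mul_le_mul_of_nonneg_left hub (by positivity)
    have h2 : 2 * D ^ 2 * (Real.pi * ((J:ℝ) + 1) * D ^ 2 * ρ (x - y) 0)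
        ≤ 2 * D ^ 2 * (Real.pi * (3 * Real.log m / Real.log 2) * D ^ 2 * ρ (x - y) 0) := by
      have hr := hρnn (x - y) 0
      have h5 : Real.pi * ((J:ℝ) + 1) * D ^ 2 * ρ (x - y) 0
          ≤ Real.pi * (3 * Real.log m / Real.log 2) * D ^ 2 * ρ (x - y) 0 := by
        apply mul_le_mul_of_nonneg_right _ hr
        apply mul_le_mul_of_nonneg_right _ (by positivity)
        exact mul_le_mul_of_nonneg_left hJlog (le_of_lt hπ)
      exact mul_le_mul_of_nonneg_left h5 (by positivity)
    have h3 : 2 * D ^ 2 * (Real.pi * (3 * Real.log m / Real.log 2) * D ^ 2 * ρ (x - y) 0)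
        = 6 * Real.pi / Real.log 2 * D ^ 4 * Real.log m * ρ x y := by
      rw [hρxy]
      field_simp
      ring
    linarith
end
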